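/- arXiv:math/0612468 — 5 statements merged into one kernel-verified Lean document; each statement's English description precedes it below -/
import Mathlib

section
/- Let T be a triad of edges (three pairwise non-collinear, i.e. pairwise intersecting, distinct edges). Then |T^⊥| = 1 or |T^⊥| = 3; moreover |T^⊥| = 3 if and only if T is a complete triad, and |T^⊥| = 1 if and only if T is an incomplete triad. In addition, any two distinct non-collinear edges are contained in a unique complete triad. -/
/- Common setup: the generalized quadrangle of order (2,2) on the edges of a
   6-element set, the near hexagon 𝓢 = ℍ₃, and the near hexagon 𝕊 = DSp(6,2). -/

/-- An edge: a 2-element subset of `Fin 6`. -/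
abbrev Edge : Type := {e : Finset (Fin 6) // e.card = 2}

/-- `perp A` is `A^⊥`: the set of edges equal to or disjoint from every element of `A`. -/
def perp (A : Set Edge) : Set Edge := {y | ∀ x ∈ A, x = y ∨ Disjoint x.1 y.1}

/-- A factor: a set of three pairwise disjoint edges (a perfect matching of `Fin 6`). -/
def IsFactor (T : Set Edge) : Prop :=
  T.ncard = 3 ∧ T.Pairwise (fun x y => Disjoint x.1 y.1)

/-- A triad: a set of three pairwise non-collinear (i.e. pairwise intersecting) distinct
    edges. -/
def IsTriad (T : Set Edge) : Prop :=
  T.ncard = 3 ∧ T.Pairwise (fun x y => ¬ Disjoint x.1 y.1)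

/-- A complete triad: a triad not contained in a set of four pairwise non-collinear edges. -/
def IsCompleteTriad (T : Set Edge) : Prop :=
  IsTriad T ∧
    ¬ ∃ U : Set Edge, T ⊆ U ∧ U.ncard = 4 ∧ U.Pairwise (fun x y => ¬ Disjoint x.1 y.1)

/-- The point set 𝓟 of 𝓢 : pairs `(x,u)` of edges with `x = u` or `x ∩ u = ∅`. -/
def NPoint : Type := {p : Edge × Edge // p.1 = p.2 ∨ Disjoint p.1.1 p.2.1}

/-- The lines 𝓛 of 𝓢 : sets `{(x, σ x) : x ∈ T}` where `T` is a factor or a complete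
    triad and `σ : T → T^⊥` is a bijection. -/
def IsLine (L : Set NPoint) : Prop :=
  ∃ (T : Set Edge) (σ : Edge → Edge),
    (IsFactor T ∨ IsCompleteTriad T) ∧ Set.BijOn σ T (perp T) ∧
    L = {p : NPoint | p.1.1 ∈ T ∧ p.1.2 = σ p.1.1}

/-- The collinearity graph of 𝓢. -/
def NG : SimpleGraph NPoint where
  Adj α β := α ≠ β ∧ ∃ L, IsLine L ∧ α ∈ L ∧ β ∈ L
  symm := ⟨fun _ _ ⟨h, L, hL, ha, hb⟩ => ⟨h.symm, L, hL, hb, ha⟩⟩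
  loopless := ⟨fun _ h => h.1 rfl⟩

/-- The point set ℙ of 𝕊 : the disjoint union 𝓟 ⊔ P ⊔ P' where `P` and `P'` are two
    copies of the edge set. -/
def BPoint : Type := NPoint ⊕ Edge ⊕ Edge

/-- Embedding of 𝓟 into ℙ. -/
def inS (p : NPoint) : BPoint := Sum.inl p

/-- Embedding of the first copy `P` of the edge set into ℙ (an edge `x` gives `x ∈ P`). -/
def inP (x : Edge) : BPoint := Sum.inr (Sum.inl x)

/-- Embedding of the second copy `P'` of the edge set into ℙ (an edge `u` gives `u' ∈ P'`). -/
def inP' (u : Edge) : BPoint := Sum.inr (Sum.inr u)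

/-- The lines 𝕃 of 𝕊 : the lines of 𝓛 together with the lines `{x, (x,u), u'}`
    for `(x,u) ∈ 𝓟` (the latter being the lines of type `𝕃₁`). -/
def IsBLine (L : Set BPoint) : Prop :=
  (∃ L₀ : Set NPoint, IsLine L₀ ∧ L = inS '' L₀) ∨
  (∃ p : NPoint, L = {inP p.1.1, inS p, inP' p.1.2})

/-- The collinearity graph of 𝕊. -/
def BG : SimpleGraph BPoint where
  Adj α β := α ≠ β ∧ ∃ L, IsBLine L ∧ α ∈ L ∧ β ∈ L
  symm := ⟨fun _ _ ⟨h, L, hL, ha, hb⟩ => ⟨h.symm, L, hL, hb, ha⟩⟩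
  loopless := ⟨fun _ h => h.1 rfl⟩

/-! ### Auxiliary machinery: indexing the 15 edges by `Fin 15` -/

def ei : Fin 15 → Edge :=
  ![⟨{0,1}, rfl⟩, ⟨{0,2}, rfl⟩, ⟨{0,3}, rfl⟩, ⟨{0,4}, rfl⟩, ⟨{0,5}, rfl⟩,
    ⟨{1,2}, rfl⟩, ⟨{1,3}, rfl⟩, ⟨{1,4}, rfl⟩, ⟨{1,5}, rfl⟩,
    ⟨{2,3}, rfl⟩, ⟨{2,4}, rfl⟩, ⟨{2,5}, rfl⟩,
    ⟨{3,4}, rfl⟩, ⟨{3,5}, rfl⟩, ⟨{4,5}, rfl⟩]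

def disB (i j : Fin 15) : Bool := decide ((ei i).1 ∩ (ei j).1 = ∅)

lemma disB_iff (i j : Fin 15) : disB i j = true ↔ Disjoint (ei i).1 (ei j).1 := by
  rw [Finset.disjoint_iff_inter_eq_empty]; exact decide_eq_true_iff

lemma einj : Function.Injective ei := by
  intro i j h; revert h; revert i j; decide

lemma esurj : ∀ y : Edge, ∃ i, ei i = y := by decide

abbrev adjB (i j : Fin 15) : Prop := ¬ disB i j = true

lemma adj_iff (i j : Fin 15) : adjB i j ↔ ¬ Disjoint (ei i).1 (ei j).1 :=
  not_congr (disB_iff i j)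

abbrev extL (i j k : Fin 15) : Prop :=
  ∃ d, d ≠ i ∧ d ≠ j ∧ d ≠ k ∧ adjB i d ∧ adjB j d ∧ adjB k d

def perpL (i j k : Fin 15) : Finset (Fin 15) :=
  Finset.univ.filter (fun m => (i = m ∨ disB i m) ∧ (j = m ∨ disB j m) ∧ (k = m ∨ disB k m))

lemma core1 : ∀ i j k : Fin 15, i ≠ j → i ≠ k → j ≠ k → adjB i j → adjB i k → adjB j k →
    (((perpL i j k).card = 1 ∨ (perpL i j k).card = 3) ∧
      ((perpL i j k).card = 3 ↔ ¬ extL i j k)) := by decide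

lemma core2 : ∀ i j : Fin 15, i ≠ j → adjB i j →
    ∃ k, (k ≠ i ∧ k ≠ j ∧ adjB i k ∧ adjB j k ∧ ¬ extL i j k) ∧
      ∀ k', (k' ≠ i ∧ k' ≠ j ∧ adjB i k' ∧ adjB j k' ∧ ¬ extL i j k') → k' = k := by decide

/-! ### Transfer lemmas -/

lemma perpL_mem (i j k m : Fin 15) : m ∈ perpL i j k ↔
    ((i = m ∨ disB i m = true) ∧ (j = m ∨ disB j m = true) ∧ (k = m ∨ disB k m = true)) := by
  rw [perpL, Finset.mem_filter]
  simp only [Finset.mem_univ, true_and]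

lemma perp_eq (i j k : Fin 15) :
    perp {ei i, ei j, ei k} = ↑((perpL i j k).image ei) := by
  ext y
  obtain ⟨m, rfl⟩ := esurj y
  rw [Finset.mem_coe, einj.mem_finset_image, perpL_mem]
  simp only [perp, Set.mem_setOf_eq]
  constructor
  · intro h
    refine ⟨?_, ?_, ?_⟩
    · rcases h (ei i) (by simp) with h' | h'
      · exact Or.inl (einj h')
      · exact Or.inr ((disB_iff i m).mpr h')
    · rcases h (ei j) (by simp) with h' | h'
      · exact Or.inl (einj h')
      · exact Or.inr ((disB_iff j m).mpr h')
    · rcases h (ei k) (by simp) with h' | h'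
      · exact Or.inl (einj h')
      · exact Or.inr ((disB_iff k m).mpr h')
  · rintro ⟨h1, h2, h3⟩ x hx
    rcases hx with rfl | rfl | rfl
    · rcases h1 with rfl | h1
      · exact Or.inl rfl
      · exact Or.inr ((disB_iff _ _).mp h1)
    · rcases h2 with rfl | h2
      · exact Or.inl rfl
      · exact Or.inr ((disB_iff _ _).mp h2)
    · rcases h3 with rfl | h3
      · exact Or.inl rfl
      · exact Or.inr ((disB_iff _ _).mp h3)

lemma perp_ncard (i j k : Fin 15) :
    (perp {ei i, ei j, ei k}).ncard = (perpL i j k).card := by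
  rw [perp_eq, Set.ncard_coe_finset, Finset.card_image_of_injective _ einj]

lemma pairwise_triple {a b c : Edge} (hab : ¬Disjoint a.1 b.1) (hac : ¬Disjoint a.1 c.1)
    (hbc : ¬Disjoint b.1 c.1) :
    ({a, b, c} : Set Edge).Pairwise (fun x y => ¬ Disjoint x.1 y.1) := by
  have hba : ¬Disjoint b.1 a.1 := fun h => hab h.symm
  have hca : ¬Disjoint c.1 a.1 := fun h => hac h.symm
  have hcb : ¬Disjoint c.1 b.1 := fun h => hbc h.symm
  intro u hu v hv huv
  simp only [Set.mem_insert_iff, Set.mem_singleton_iff] at hu hv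
  rcases hu with rfl | rfl | rfl <;> rcases hv with rfl | rfl | rfl <;>
    first | exact absurd rfl huv | assumption

lemma triad_of (i j k : Fin 15) (hij : i ≠ j) (hik : i ≠ k) (hjk : j ≠ k)
    (aij : adjB i j) (aik : adjB i k) (ajk : adjB j k) :
    IsTriad {ei i, ei j, ei k} :=
  ⟨Set.ncard_eq_three.mpr ⟨_, _, _, einj.ne_iff.mpr hij, einj.ne_iff.mpr hik,
      einj.ne_iff.mpr hjk, rfl⟩,
    pairwise_triple ((adj_iff i j).mp aij) ((adj_iff i k).mp aik) ((adj_iff j k).mp ajk)⟩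

lemma triad_rep {T : Set Edge} (h : IsTriad T) :
    ∃ i j k : Fin 15, i ≠ j ∧ i ≠ k ∧ j ≠ k ∧ adjB i j ∧ adjB i k ∧ adjB j k ∧
      T = {ei i, ei j, ei k} := by
  obtain ⟨a, b, c, hab, hac, hbc, rfl⟩ := Set.ncard_eq_three.mp h.1
  obtain ⟨i, rfl⟩ := esurj a
  obtain ⟨j, rfl⟩ := esurj b
  obtain ⟨k, rfl⟩ := esurj c
  refine ⟨i, j, k, einj.ne_iff.mp hab, einj.ne_iff.mp hac, einj.ne_iff.mp hbc, ?_, ?_, ?_, rfl⟩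
  · exact (adj_iff i j).mpr (h.2 (by simp) (by simp) hab)
  · exact (adj_iff i k).mpr (h.2 (by simp) (by simp) hac)
  · exact (adj_iff j k).mpr (h.2 (by simp) (by simp) hbc)

lemma complete_iff (i j k : Fin 15) (hij : i ≠ j) (hik : i ≠ k) (hjk : j ≠ k)
    (aij : adjB i j) (aik : adjB i k) (ajk : adjB j k) :
    IsCompleteTriad {ei i, ei j, ei k} ↔ ¬ extL i j k := by
  constructor
  · rintro ⟨-, hnoU⟩ ⟨d, hdi, hdj, hdk, adi, adjd, adk⟩
    apply hnoU
    have hdT : ei d ∉ ({ei i, ei j, ei k} : Set Edge) := by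
      simp only [Set.mem_insert_iff, Set.mem_singleton_iff]
      push_neg
      exact ⟨einj.ne_iff.mpr hdi, einj.ne_iff.mpr hdj, einj.ne_iff.mpr hdk⟩
    refine ⟨insert (ei d) {ei i, ei j, ei k}, Set.subset_insert _ _, ?_, ?_⟩
    · rw [Set.ncard_insert_of_notMem hdT (Set.toFinite _),
        (triad_of i j k hij hik hjk aij aik ajk).1]
    · intro u hu v hv huv
      have base := pairwise_triple ((adj_iff i j).mp aij) ((adj_iff i k).mp aik)
        ((adj_iff j k).mp ajk)
      have hd : ∀ w ∈ ({ei i, ei j, ei k} : Set Edge), ¬ Disjoint (ei d).1 w.1 := by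
        rintro w (rfl | rfl | rfl)
        · exact fun h => (adj_iff i d).mp adi h.symm
        · exact fun h => (adj_iff j d).mp adjd h.symm
        · exact fun h => (adj_iff k d).mp adk h.symm
      rcases hu with rfl | hu <;> rcases hv with rfl | hv
      · exact absurd rfl huv
      · exact hd v hv
      · exact fun h => hd u hu h.symm
      · exact base hu hv huv
  · intro hext
    refine ⟨triad_of i j k hij hik hjk aij aik ajk, ?_⟩
    rintro ⟨U, hTU, hU4, hUp⟩
    have hnsub : ¬ (U ⊆ {ei i, ei j, ei k}) := by
      intro h
      have := Set.ncard_le_ncard h (Set.toFinite _)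
      rw [hU4, (triad_of i j k hij hik hjk aij aik ajk).1] at this
      omega
    obtain ⟨de, hdeU, hdeT⟩ := Set.not_subset.mp hnsub
    obtain ⟨d, rfl⟩ := esurj de
    have hmem : ∀ w ∈ ({ei i, ei j, ei k} : Set Edge), ei d ≠ w ∧ ¬ Disjoint w.1 (ei d).1 := by
      intro w hw
      have hne : ei d ≠ w := fun h => hdeT (h ▸ hw)
      exact ⟨hne, hUp (hTU hw) hdeU (Ne.symm hne)⟩
    apply hext
    refine ⟨d, ?_, ?_, ?_, ?_, ?_, ?_⟩
    · exact einj.ne_iff.mp (hmem (ei i) (by simp)).1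
    · exact einj.ne_iff.mp (hmem (ei j) (by simp)).1
    · exact einj.ne_iff.mp (hmem (ei k) (by simp)).1
    · exact (adj_iff i d).mpr (hmem (ei i) (by simp)).2
    · exact (adj_iff j d).mpr (hmem (ei j) (by simp)).2
    · exact (adj_iff k d).mpr (hmem (ei k) (by simp)).2


/-- For any triad `T` of edges, `|T^⊥| = 1` or `|T^⊥| = 3`; moreover
`|T^⊥| = 3` iff `T` is complete and `|T^⊥| = 1` iff `T` is incomplete. In addition, any two
distinct non-collinear edges are contained in a unique complete triad. -/
theorem statement0 :
    (∀ T : Set Edge, IsTriad T →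
      ((perp T).ncard = 1 ∨ (perp T).ncard = 3) ∧
      ((perp T).ncard = 3 ↔ IsCompleteTriad T) ∧
      ((perp T).ncard = 1 ↔ ¬ IsCompleteTriad T)) ∧
    (∀ x y : Edge, x ≠ y → ¬ Disjoint x.1 y.1 →
      ∃! T : Set Edge, IsCompleteTriad T ∧ x ∈ T ∧ y ∈ T) := by
  constructor
  · intro T hT
    obtain ⟨i, j, k, hij, hik, hjk, aij, aik, ajk, rfl⟩ := triad_rep hT
    have c1 := core1 i j k hij hik hjk aij aik ajk
    have hci := complete_iff i j k hij hik hjk aij aik ajk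
    have hcard := perp_ncard i j k
    have h3 : (perp {ei i, ei j, ei k}).ncard = 3 ↔ IsCompleteTriad {ei i, ei j, ei k} := by
      rw [hcard]; exact c1.2.trans hci.symm
    refine ⟨?_, h3, ?_⟩
    · rw [hcard]; exact c1.1
    · constructor
      · intro h1 hc
        have := h3.mpr hc
        rw [hcard] at h1 this
        omega
      · intro hc
        rcases c1.1 with h | h
        · rw [hcard]; exact h
        · exact absurd (h3.mp (hcard.trans h)) hc
  · intro x y hxy hnd
    obtain ⟨i, rfl⟩ := esurj x
    obtain ⟨j, rfl⟩ := esurj y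
    have hij : i ≠ j := einj.ne_iff.mp hxy
    have aij : adjB i j := (adj_iff i j).mpr hnd
    obtain ⟨k, ⟨hki, hkj, aik, ajk, hnext⟩, huniq⟩ := core2 i j hij aij
    have hik := hki.symm
    have hjk := hkj.symm
    refine ⟨{ei i, ei j, ei k}, ⟨(complete_iff i j k hij hik hjk aij aik ajk).mpr hnext,
      by simp, by simp⟩, ?_⟩
    rintro T' ⟨hC', hxT', hyT'⟩
    have hsub : ({ei i, ei j} : Set Edge) ⊆ T' :=
      Set.insert_subset_iff.mpr ⟨hxT', Set.singleton_subset_iff.mpr hyT'⟩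
    have hdiff : (T' \ {ei i, ei j}).ncard = 1 := by
      rw [Set.ncard_diff hsub (Set.toFinite _), hC'.1.1, Set.ncard_pair hxy]
    obtain ⟨z, hz⟩ := Set.ncard_eq_one.mp hdiff
    have hzmem : z ∈ T' \ ({ei i, ei j} : Set Edge) := by rw [hz]; exact rfl
    have hT' : T' = {ei i, ei j, z} := by
      rw [← Set.union_diff_cancel hsub, hz]
      ext u
      simp only [Set.mem_union, Set.mem_insert_iff, Set.mem_singleton_iff]
      tauto
    obtain ⟨k', rfl⟩ := esurj z
    have hzx : ei k' ≠ ei i := fun h => hzmem.2 (by simp [h])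
    have hzy : ei k' ≠ ei j := fun h => hzmem.2 (by simp [h])
    have hik' : i ≠ k' := (einj.ne_iff.mp hzx).symm
    have hjk' : j ≠ k' := (einj.ne_iff.mp hzy).symm
    have aik' : adjB i k' :=
      (adj_iff i k').mpr (hC'.1.2 hxT' hzmem.1 (Ne.symm hzx))
    have ajk' : adjB j k' :=
      (adj_iff j k').mpr (hC'.1.2 hyT' hzmem.1 (Ne.symm hzy))
    rw [hT'] at hC' ⊢
    have hnext' : ¬ extL i j k' :=
      (complete_iff i j k' hij hik' hjk' aij aik' ajk').mp hC'
    rw [huniq k' ⟨hik'.symm, hjk'.symm, aik', ajk', hnext'⟩]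
end

section
/- Two distinct points α = (x,u) and β = (y,v) of 𝓢 are collinear if and only if x ≠ y, u ≠ v, u ∈ y^⊥ and v ∈ x^⊥. -/
open scoped symmDiff

namespace S1aux
open Finset

lemma two_subsets {D u v w e : Finset (Fin 6)} (hD : D.card = 3)
    (hu : u ⊆ D) (hv : v ⊆ D) (hw : w ⊆ D) (he : e ⊆ D)
    (hu2 : u.card = 2) (hv2 : v.card = 2) (hw2 : w.card = 2) (he2 : e.card = 2)
    (huv : u ≠ v) (huw : u ≠ w) (hvw : v ≠ w) :
    e = u ∨ e = v ∨ e = w := by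
  have recov : ∀ s ⊆ D, D \ (D \ s) = s := by
    intro s hs
    rw [sdiff_sdiff_right_self, inf_eq_inter, inter_eq_right.2 hs]
  have card1 : ∀ s ⊆ D, s.card = 2 → (D \ s).card = 1 := by
    intro s hs h2
    rw [card_sdiff_of_subset hs, hD, h2]
  obtain ⟨p, hp⟩ := card_eq_one.mp (card1 u hu hu2)
  obtain ⟨q, hq⟩ := card_eq_one.mp (card1 v hv hv2)
  obtain ⟨r, hr⟩ := card_eq_one.mp (card1 w hw hw2)
  obtain ⟨s, hs⟩ := card_eq_one.mp (card1 e he he2)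
  have hpq : p ≠ q := by
    intro h; apply huv
    rw [← recov u hu, ← recov v hv, hp, hq, h]
  have hpr : p ≠ r := by
    intro h; apply huw
    rw [← recov u hu, ← recov w hw, hp, hr, h]
  have hqr : q ≠ r := by
    intro h; apply hvw
    rw [← recov v hv, ← recov w hw, hq, hr, h]
  have hpD : p ∈ D := (sdiff_subset) (hp ▸ mem_singleton_self p)
  have hqD : q ∈ D := (sdiff_subset) (hq ▸ mem_singleton_self q)
  have hrD : r ∈ D := (sdiff_subset) (hr ▸ mem_singleton_self r)
  have hsub : ({p, q, r} : Finset (Fin 6)) ⊆ D := by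
    intro t ht
    simp only [mem_insert, mem_singleton] at ht
    rcases ht with rfl | rfl | rfl <;> assumption
  have hcard : ({p, q, r} : Finset (Fin 6)).card = 3 := by
    rw [card_insert_of_notMem (by simp [hpq, hpr]), card_insert_of_notMem (by simp [hqr]),
      card_singleton]
  have hDeq : ({p, q, r} : Finset (Fin 6)) = D :=
    eq_of_subset_of_card_le hsub (by omega)
  have hsD : s ∈ D := (sdiff_subset) (hs ▸ mem_singleton_self s)
  rw [← hDeq] at hsD
  simp only [mem_insert, mem_singleton] at hsD
  rcases hsD with rfl | rfl | rfl
  · left; rw [← recov e he, ← recov u hu, hp, hs]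
  · right; left; rw [← recov e he, ← recov v hv, hq, hs]
  · right; right; rw [← recov e he, ← recov w hw, hr, hs]

lemma bijOn_triple {x y z u v w : Edge} (hxy : x ≠ y) (hxz : x ≠ z) (hyz : y ≠ z)
    (huv : u ≠ v) (huw : u ≠ w) (hvw : v ≠ w) :
    Set.BijOn (fun t => if t = x then u else if t = y then v else w)
      ({x, y, z} : Set Edge) ({u, v, w} : Set Edge) := by
  refine ⟨?_, ?_, ?_⟩
  · rintro t (rfl | rfl | rfl) <;>
      simp [hxy, hxz, hyz, hxy.symm, hxz.symm, hyz.symm]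
  · rintro a (rfl | rfl | rfl) b (rfl | rfl | rfl) hab <;>
      simp only [if_pos rfl, if_neg hxy.symm, if_neg hxz.symm, if_neg hyz.symm,
        if_neg hxy, if_neg hxz, if_neg hyz] at hab <;>
      first
        | rfl
        | exact absurd hab huv | exact absurd hab.symm huv
        | exact absurd hab huw | exact absurd hab.symm huw
        | exact absurd hab hvw | exact absurd hab.symm hvw
  · rintro s (rfl | rfl | rfl)
    · exact ⟨x, by simp, by simp⟩
    · exact ⟨y, by simp, by simp [hxy.symm]⟩
    · exact ⟨z, by simp, by simp [hxz.symm, hyz.symm]⟩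

lemma pick_third {γ : Type*} {x y z u v : γ} (hxy : x ≠ y) (hxz : x ≠ z) (hyz : y ≠ z)
    (hu : u = x ∨ u = y ∨ u = z) (hv : v = x ∨ v = y ∨ v = z) (huv : u ≠ v) :
    ∃ w, ({u, v, w} : Set γ) = {x, y, z} ∧ u ≠ w ∧ v ≠ w := by
  rcases hu with rfl | rfl | rfl <;> rcases hv with rfl | rfl | rfl
  · exact absurd rfl huv
  · exact ⟨z, rfl, hxz, hyz⟩
  · exact ⟨y, by ext t; simp; tauto, hxy, (Ne.symm hyz)⟩
  · exact ⟨z, by ext t; simp; tauto, hyz, hxz⟩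
  · exact absurd rfl huv
  · exact ⟨x, by ext t; simp; tauto, hxy.symm, hxz.symm⟩
  · exact ⟨y, by ext t; simp; tauto, hyz.symm, hxy⟩
  · exact ⟨x, by ext t; simp; tauto, hxz.symm, hxy.symm⟩
  · exact absurd rfl huv

lemma ne_of_disj {a b : Edge} (hab : Disjoint a.1 b.1) : a ≠ b := by
  intro he
  subst he
  rw [disjoint_self] at hab
  have h2 := a.2
  rw [hab] at h2
  simp at h2

lemma inter_card_le {x y : Edge} (hxy : x ≠ y) : (x.1 ∩ y.1).card ≤ 1 := by
  by_contra hh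
  push_neg at hh
  have h1 : x.1 ∩ y.1 = x.1 :=
    eq_of_subset_of_card_le inter_subset_left (by rw [x.2]; omega)
  have h2 : x.1 ⊆ y.1 := h1 ▸ inter_subset_right
  exact hxy (Subtype.ext (eq_of_subset_of_card_le h2 (by rw [x.2, y.2])))

lemma adj_case1 (x u y v : Edge) (hα : x = u ∨ Disjoint x.1 u.1)
    (hβ : y = v ∨ Disjoint y.1 v.1)
    (hxy : x ≠ y) (huv : u ≠ v)
    (hu : y = u ∨ Disjoint y.1 u.1) (hv : x = v ∨ Disjoint x.1 v.1)
    (hd : Disjoint x.1 y.1) :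
    ∃ L, IsLine L ∧ (⟨(x, u), hα⟩ : NPoint) ∈ L ∧ (⟨(y, v), hβ⟩ : NPoint) ∈ L := by
  have hzc : ((x.1 ∪ y.1)ᶜ).card = 2 := by
    rw [card_compl, card_union_of_disjoint hd, x.2, y.2, Fintype.card_fin]
  set z : Edge := ⟨(x.1 ∪ y.1)ᶜ, hzc⟩ with hzdef
  have hdxz : Disjoint x.1 z.1 :=
    disjoint_compl_right.mono_left subset_union_left
  have hdyz : Disjoint y.1 z.1 :=
    disjoint_compl_right.mono_left subset_union_right
  have hxz : x ≠ z := ne_of_disj hdxz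
  have hyz : y ≠ z := ne_of_disj hdyz
  have memT : ∀ w₀ : Edge, (x = w₀ ∨ Disjoint x.1 w₀.1) → (y = w₀ ∨ Disjoint y.1 w₀.1) →
      (w₀ = x ∨ w₀ = y ∨ w₀ = z) := by
    rintro w₀ (rfl | h1) h2
    · exact Or.inl rfl
    rcases h2 with rfl | h2
    · exact Or.inr (Or.inl rfl)
    right; right
    apply Subtype.ext
    refine eq_of_subset_of_card_le ?_ (by rw [w₀.2, hzc])
    exact le_compl_iff_disjoint_left.mpr (disjoint_union_left.mpr ⟨h1, h2⟩)
  have hu3 := memT u hα hu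
  have hv3 := memT v hv hβ
  obtain ⟨w, hset, huw, hvw⟩ := pick_third hxy hxz hyz hu3 hv3 huv
  have hperp : perp ({x, y, z} : Set Edge) = {x, y, z} := by
    ext e
    simp only [perp, Set.mem_setOf_eq, Set.mem_insert_iff, Set.mem_singleton_iff]
    constructor
    · intro he
      by_cases e1 : e = x
      · exact Or.inl e1
      by_cases e2 : e = y
      · exact Or.inr (Or.inl e2)
      have h1 := (he x (by simp)).resolve_left (fun hh => e1 hh.symm)
      have h2 := (he y (by simp)).resolve_left (fun hh => e2 hh.symm)
      rcases memT e (Or.inr h1) (Or.inr h2) with h | h | h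
      · exact absurd h e1
      · exact absurd h e2
      · exact Or.inr (Or.inr h)
    · rintro (rfl | rfl | rfl) t ht <;>
        rcases ht with rfl | rfl | rfl
      · exact Or.inl rfl
      · exact Or.inr hd.symm
      · exact Or.inr hdxz.symm
      · exact Or.inr hd
      · exact Or.inl rfl
      · exact Or.inr hdyz.symm
      · exact Or.inr hdxz
      · exact Or.inr hdyz
      · exact Or.inl rfl
  have hfac : IsFactor ({x, y, z} : Set Edge) := by
    constructor
    · exact Set.ncard_eq_three.mpr ⟨x, y, z, hxy, hxz, hyz, rfl⟩
    · intro a ha b hb hab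
      simp only [Set.mem_insert_iff, Set.mem_singleton_iff] at ha hb
      rcases ha with rfl | rfl | rfl <;> rcases hb with rfl | rfl | rfl <;>
        first
          | exact absurd rfl hab
          | exact hd | exact hd.symm | exact hdxz | exact hdxz.symm
          | exact hdyz | exact hdyz.symm
  have hbij := bijOn_triple hxy hxz hyz huv huw hvw
  rw [hset] at hbij
  refine ⟨{p : NPoint | p.1.1 ∈ ({x, y, z} : Set Edge) ∧
      p.1.2 = (fun t => if t = x then u else if t = y then v else w) p.1.1},
    ⟨{x, y, z}, _, Or.inl hfac, by rw [hperp]; exact hbij, rfl⟩,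
    ⟨by simp, by simp⟩, ⟨by simp, by simp [Ne.symm hxy]⟩⟩

set_option maxHeartbeats 1000000 in
lemma adj_case2 (x u y v : Edge) (hα : x = u ∨ Disjoint x.1 u.1)
    (hβ : y = v ∨ Disjoint y.1 v.1)
    (hxy : x ≠ y) (huv : u ≠ v)
    (hu : y = u ∨ Disjoint y.1 u.1) (hv : x = v ∨ Disjoint x.1 v.1)
    (hd : ¬ Disjoint x.1 y.1) :
    ∃ L, IsLine L ∧ (⟨(x, u), hα⟩ : NPoint) ∈ L ∧ (⟨(y, v), hβ⟩ : NPoint) ∈ L := by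
  -- u and v are disjoint from both x and y
  have hux : u ≠ x := by
    rintro rfl
    rcases hu with h | h
    · exact hxy h.symm
    · exact hd h.symm
  have hdxu : Disjoint x.1 u.1 := hα.resolve_left (fun hh => hux hh.symm)
  have hdyu : Disjoint y.1 u.1 := by
    rcases hu with h | h
    · exact absurd h.symm (by rintro rfl; exact hd hdxu)
    · exact h
  have hvx : v ≠ x := by
    rintro rfl
    rcases hβ with h | h
    · exact hxy h.symm
    · exact hd h.symm
  have hdxv : Disjoint x.1 v.1 := hv.resolve_left (fun hh => hvx hh.symm)
  have hdyv : Disjoint y.1 v.1 := by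
    rcases hβ with h | h
    · exact absurd h.symm (by rintro rfl; exact hd hdxv)
    · exact h
  -- intersection cardinalities
  have hixy : (x.1 ∩ y.1).card = 1 :=
    le_antisymm (inter_card_le hxy)
      (card_pos.mpr (not_disjoint_iff_nonempty_inter.mp hd))
  have huxy : (x.1 ∪ y.1).card = 3 := by
    have hh := card_union_add_card_inter x.1 y.1
    rw [x.2, y.2, hixy] at hh; omega
  set A : Finset (Fin 6) := x.1 ∪ y.1 with hAdef
  set D : Finset (Fin 6) := Aᶜ with hDdef
  have hD3 : D.card = 3 := by rw [hDdef, card_compl, huxy, Fintype.card_fin]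
  -- the third edge of the triangle
  have hzc : (x.1 ∆ y.1).card = 2 := by
    rw [symmDiff_eq_sup_sdiff_inf, sup_eq_union, inf_eq_inter,
      card_sdiff_of_subset inter_subset_union, huxy, hixy]
  set z : Edge := ⟨x.1 ∆ y.1, hzc⟩ with hzdef
  have hxzi : x.1 ∩ z.1 = x.1 \ y.1 := by
    ext t; simp [hzdef, Finset.mem_symmDiff]; tauto
  have hyzi : y.1 ∩ z.1 = y.1 \ x.1 := by
    ext t; simp [hzdef, Finset.mem_symmDiff]; tauto
  have hxs1 : (x.1 \ y.1).card = 1 := by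
    have hh := card_inter_add_card_sdiff x.1 y.1
    rw [x.2, hixy] at hh; omega
  have hys1 : (y.1 \ x.1).card = 1 := by
    have hh := card_inter_add_card_sdiff y.1 x.1
    rw [y.2, inter_comm, hixy] at hh; omega
  have hxzc : (x.1 ∩ z.1).card = 1 := by rw [hxzi]; exact hxs1
  have hyzc : (y.1 ∩ z.1).card = 1 := by rw [hyzi]; exact hys1
  have hxz : x ≠ z := by
    intro he; rw [he, inter_self, z.2] at hxzc; omega
  have hyz : y ≠ z := by
    intro he; rw [he, inter_self, z.2] at hyzc; omega
  have hndxz : ¬ Disjoint x.1 z.1 :=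
    not_disjoint_iff_nonempty_inter.mpr (card_pos.mp (by omega))
  have hndyz : ¬ Disjoint y.1 z.1 :=
    not_disjoint_iff_nonempty_inter.mpr (card_pos.mp (by omega))
  have hzA : z.1 ⊆ A := by
    intro t ht
    simp only [hzdef, Finset.mem_symmDiff] at ht
    simp only [hAdef, mem_union]
    tauto
  -- u, v lie in the complement D
  have huD : u.1 ⊆ D :=
    le_compl_iff_disjoint_left.mpr (disjoint_union_left.mpr ⟨hdxu, hdyu⟩)
  have hvD : v.1 ⊆ D :=
    le_compl_iff_disjoint_left.mpr (disjoint_union_left.mpr ⟨hdxv, hdyv⟩)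
  have hiuv : (u.1 ∩ v.1).card = 1 := by
    have h1 := inter_card_le huv
    have h2 : (u.1 ∪ v.1).card ≤ 3 := hD3 ▸ card_le_card (union_subset huD hvD)
    have hh := card_union_add_card_inter u.1 v.1
    rw [u.2, v.2] at hh; omega
  have huvu : (u.1 ∪ v.1).card = 3 := by
    have hh := card_union_add_card_inter u.1 v.1
    rw [u.2, v.2, hiuv] at hh; omega
  have hwc : (u.1 ∆ v.1).card = 2 := by
    rw [symmDiff_eq_sup_sdiff_inf, sup_eq_union, inf_eq_inter,
      card_sdiff_of_subset inter_subset_union, huvu, hiuv]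
  set w : Edge := ⟨u.1 ∆ v.1, hwc⟩ with hwdef
  have hwuv : w.1 ⊆ u.1 ∪ v.1 := by
    intro t ht
    simp only [hwdef, Finset.mem_symmDiff] at ht
    simp only [mem_union]
    tauto
  have hwD : w.1 ⊆ D := hwuv.trans (union_subset huD hvD)
  have huwi : u.1 ∩ w.1 = u.1 \ v.1 := by
    ext t; simp [hwdef, Finset.mem_symmDiff]; tauto
  have hvwi : v.1 ∩ w.1 = v.1 \ u.1 := by
    ext t; simp [hwdef, Finset.mem_symmDiff]; tauto
  have huwc : (u.1 ∩ w.1).card = 1 := by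
    rw [huwi]
    have hh := card_inter_add_card_sdiff u.1 v.1
    rw [u.2, hiuv] at hh; omega
  have hvwc : (v.1 ∩ w.1).card = 1 := by
    rw [hvwi]
    have hh := card_inter_add_card_sdiff v.1 u.1
    rw [v.2, inter_comm, hiuv] at hh; omega
  have huw : u ≠ w := by
    intro he; rw [he, inter_self, w.2] at huwc; omega
  have hvw : v ≠ w := by
    intro he; rw [he, inter_self, w.2] at hvwc; omega
  -- disjointness of u,v,w from x,y,z
  have hdAD : Disjoint A D := disjoint_compl_right
  have hdzu : Disjoint z.1 u.1 := hdAD.mono hzA huD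
  have hdzv : Disjoint z.1 v.1 := hdAD.mono hzA hvD
  have hdxw : Disjoint x.1 w.1 := hdAD.mono subset_union_left hwD
  have hdyw : Disjoint y.1 w.1 := hdAD.mono subset_union_right hwD
  have hdzw : Disjoint z.1 w.1 := hdAD.mono hzA hwD
  -- perp of the triangle
  have hperp : perp ({x, y, z} : Set Edge) = {u, v, w} := by
    ext e
    simp only [perp, Set.mem_setOf_eq, Set.mem_insert_iff, Set.mem_singleton_iff]
    constructor
    · intro he
      have h1 : Disjoint x.1 e.1 := by
        rcases he x (by simp) with rfl | hh
        · exfalso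
          rcases he y (by simp) with h2 | h2
          · exact hxy h2.symm
          · exact hd h2.symm
        · exact hh
      have h2 : Disjoint y.1 e.1 := by
        rcases he y (by simp) with rfl | hh
        · exfalso
          rcases he x (by simp) with h2 | h2
          · exact hxy h2
          · exact hd h2
        · exact hh
      have heD : e.1 ⊆ D :=
        le_compl_iff_disjoint_left.mpr (disjoint_union_left.mpr ⟨h1, h2⟩)
      have := two_subsets hD3 huD hvD hwD heD u.2 v.2 w.2 e.2
        (fun hh => huv (Subtype.ext hh)) (fun hh => huw (Subtype.ext hh))
        (fun hh => hvw (Subtype.ext hh))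
      rcases this with hh | hh | hh
      · exact Or.inl (Subtype.ext hh)
      · exact Or.inr (Or.inl (Subtype.ext hh))
      · exact Or.inr (Or.inr (Subtype.ext hh))
    · rintro (rfl | rfl | rfl) t ht <;> rcases ht with rfl | rfl | rfl
      · exact Or.inr hdxu
      · exact Or.inr hdyu
      · exact Or.inr hdzu
      · exact Or.inr hdxv
      · exact Or.inr hdyv
      · exact Or.inr hdzv
      · exact Or.inr hdxw
      · exact Or.inr hdyw
      · exact Or.inr hdzw
  -- the triangle is a complete triad
  have hncard3 : ({x, y, z} : Set Edge).ncard = 3 :=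
    Set.ncard_eq_three.mpr ⟨x, y, z, hxy, hxz, hyz, rfl⟩
  have htriad : IsCompleteTriad ({x, y, z} : Set Edge) := by
    refine ⟨⟨hncard3, ?_⟩, ?_⟩
    · intro a ha b hb hab
      simp only [Set.mem_insert_iff, Set.mem_singleton_iff] at ha hb
      rcases ha with rfl | rfl | rfl <;> rcases hb with rfl | rfl | rfl <;>
        first
          | exact absurd rfl hab
          | exact hd | exact fun hh => hd hh.symm
          | exact hndxz | exact fun hh => hndxz hh.symm
          | exact hndyz | exact fun hh => hndyz hh.symm
    · rintro ⟨U, hTU, hU4, hUp⟩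
      obtain ⟨e, heU, heT⟩ : ∃ e ∈ U, e ∉ ({x, y, z} : Set Edge) := by
        by_contra hc
        push_neg at hc
        have h5 := Set.ncard_le_ncard hc (Set.toFinite _)
        rw [hU4, hncard3] at h5; omega
      have hnd : ∀ t ∈ ({x, y, z} : Set Edge), ¬ Disjoint t.1 e.1 :=
        fun t ht => hUp (hTU ht) heU (fun hh => heT (hh ▸ ht))
      by_cases hc : e.1 ⊆ A
      · have := two_subsets huxy subset_union_left subset_union_right hzA hc
          x.2 y.2 z.2 e.2 (fun hh => hxy (Subtype.ext hh)) ?hxzne ?hyzne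
        case hxzne => exact fun hh => hxz (Subtype.ext hh)
        case hyzne => exact fun hh => hyz (Subtype.ext hh)
        apply heT
        rcases this with hh | hh | hh
        · exact Or.inl (Subtype.ext hh)
        · exact Or.inr (Or.inl (Subtype.ext hh))
        · exact Or.inr (Or.inr (Subtype.ext hh))
      · -- e meets A in at most one point
        have hIc : (A ∩ e.1).card ≤ 1 := by
          have h1 := card_inter_add_card_sdiff e.1 A
          have h2 : 1 ≤ (e.1 \ A).card :=
            card_pos.mpr (sdiff_nonempty.mpr hc)
          rw [e.2, inter_comm] at h1
          omega
        have key : ∀ t : Edge, t.1 ⊆ A → ¬ Disjoint t.1 e.1 → t.1 ∩ e.1 = A ∩ e.1 := by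
          intro t htA hnd'
          have hsub : t.1 ∩ e.1 ⊆ A ∩ e.1 := inter_subset_inter htA (Finset.Subset.refl _)
          have h1 : 1 ≤ (t.1 ∩ e.1).card :=
            card_pos.mpr (not_disjoint_iff_nonempty_inter.mp hnd')
          exact eq_of_subset_of_card_le hsub (by
            have := card_le_card hsub; omega)
        have hkx := key x subset_union_left (hnd x (by simp))
        have hky := key y subset_union_right (hnd y (by simp))
        have hkz := key z hzA (hnd z (by simp))
        obtain ⟨t, ht⟩ : (x.1 ∩ e.1).Nonempty :=
          not_disjoint_iff_nonempty_inter.mp (hnd x (by simp))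
        have htx : t ∈ x.1 := mem_of_mem_inter_left ht
        have hty : t ∈ y.1 := by
          have : t ∈ y.1 ∩ e.1 := by rw [hky, ← hkx]; exact ht
          exact mem_of_mem_inter_left this
        have htz : t ∈ z.1 := by
          have : t ∈ z.1 ∩ e.1 := by rw [hkz, ← hkx]; exact ht
          exact mem_of_mem_inter_left this
        rw [hzdef] at htz
        simp only [Finset.mem_symmDiff] at htz
        tauto
  have hbij := bijOn_triple hxy hxz hyz huv huw hvw
  rw [← hperp] at hbij
  refine ⟨{p : NPoint | p.1.1 ∈ ({x, y, z} : Set Edge) ∧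
      p.1.2 = (fun t => if t = x then u else if t = y then v else w) p.1.1},
    ⟨{x, y, z}, _, Or.inr htriad, hbij, rfl⟩,
    ⟨by simp, by simp⟩, ⟨by simp, by simp [Ne.symm hxy]⟩⟩

end S1aux

/-- Two distinct points `α = (x,u)` and `β = (y,v)` of 𝓢 are collinear iff
`x ≠ y`, `u ≠ v`, `u ∈ y^⊥` and `v ∈ x^⊥`. -/
theorem statement1 (α β : NPoint) (h : α ≠ β) :
    NG.Adj α β ↔
      (α.1.1 ≠ β.1.1 ∧ α.1.2 ≠ β.1.2 ∧
        α.1.2 ∈ perp {β.1.1} ∧ β.1.2 ∈ perp {α.1.1}) := by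
  constructor
  · rintro ⟨hne, L, ⟨T, σ, hT, hbij, rfl⟩, haL, hbL⟩
    obtain ⟨hx, hu⟩ := haL
    obtain ⟨hy, hv⟩ := hbL
    have hxy : α.1.1 ≠ β.1.1 := by
      intro he
      exact h (Subtype.ext (Prod.ext he (by rw [hu, hv, he])))
    refine ⟨hxy, ?_, ?_, ?_⟩
    · intro he
      exact hxy (hbij.injOn hx hy (by rw [← hu, ← hv]; exact he))
    · intro t ht
      have ht' : t = β.1.1 := ht
      subst ht'
      rw [hu]
      exact hbij.mapsTo hx β.1.1 hy
    · intro t ht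
      have ht' : t = α.1.1 := ht
      subst ht'
      rw [hv]
      exact hbij.mapsTo hy α.1.1 hx
  · rintro ⟨hxy, huv, hu, hv⟩
    have hu' : β.1.1 = α.1.2 ∨ Disjoint β.1.1.1 α.1.2.1 := hu β.1.1 rfl
    have hv' : α.1.1 = β.1.2 ∨ Disjoint α.1.1.1 β.1.2.1 := hv α.1.1 rfl
    obtain ⟨⟨x, u⟩, hα⟩ := α
    obtain ⟨⟨y, v⟩, hβ⟩ := β
    refine ⟨h, ?_⟩
    by_cases hd : Disjoint x.1 y.1
    · exact S1aux.adj_case1 x u y v hα hβ hxy huv hu' hv' hd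
    · exact S1aux.adj_case2 x u y v hα hβ hxy huv hu' hv' hd
end

section
/- Let α = (x,u) and β = (y,v) be distinct non-collinear points of 𝓢 such that either x = y and u ≠ v, or x ≠ y and u = v. Then |{α,β}^⊥| ≥ 2. -/
lemma edge_ne_of_disjoint {e f : Edge} (h : Disjoint e.1 f.1) : e ≠ f := by
  rintro rfl
  have h2 := e.2
  rw [disjoint_self] at h
  simp [h] at h2

lemma subset_compl_of_disjoint {s t : Finset (Fin 6)} (h : Disjoint s t) : s ⊆ tᶜ :=
  fun z hz => Finset.mem_compl.mpr (fun hzt => (Finset.disjoint_left.mp h) hz hzt)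

def cedge (e f : Edge) (h : Disjoint e.1 f.1) : Edge :=
  ⟨(e.1 ∪ f.1)ᶜ, by rw [Finset.card_compl, Finset.card_union_of_disjoint h, e.2, f.2, Fintype.card_fin]⟩

lemma cedge_disj_left (e f : Edge) (h : Disjoint e.1 f.1) : Disjoint e.1 (cedge e f h).1 :=
  disjoint_compl_right.mono_left le_sup_left

lemma cedge_disj_right (e f : Edge) (h : Disjoint e.1 f.1) : Disjoint f.1 (cedge e f h).1 :=
  disjoint_compl_right.mono_left le_sup_right

lemma cedge_union (e f : Edge) (h : Disjoint e.1 f.1) :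
    e.1 ∪ f.1 ∪ (cedge e f h).1 = Finset.univ := Finset.union_compl _

lemma isFactor_mk {a b c : Edge} (hab : Disjoint a.1 b.1) (hac : Disjoint a.1 c.1)
    (hbc : Disjoint b.1 c.1) : IsFactor {a,b,c} := by
  refine ⟨Set.ncard_eq_three.mpr ⟨a,b,c, edge_ne_of_disjoint hab, edge_ne_of_disjoint hac,
    edge_ne_of_disjoint hbc, rfl⟩, ?_⟩
  intro x hx y hy hxy
  simp only [Set.mem_insert_iff, Set.mem_singleton_iff] at hx hy
  rcases hx with rfl|rfl|rfl <;> rcases hy with rfl|rfl|rfl <;>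
    first
    | exact absurd rfl hxy
    | exact hab
    | exact hac
    | exact hbc
    | exact hab.symm
    | exact hac.symm
    | exact hbc.symm

lemma perp_factor {a b c : Edge} (hab : Disjoint a.1 b.1) (hac : Disjoint a.1 c.1)
    (hbc : Disjoint b.1 c.1) (huniv : a.1 ∪ b.1 ∪ c.1 = Finset.univ) :
    perp {a,b,c} = {a,b,c} := by
  ext y
  simp only [perp, Set.mem_setOf_eq, Set.mem_insert_iff, Set.mem_singleton_iff]
  constructor
  · intro hy
    by_contra hn
    push_neg at hn
    obtain ⟨hya, hyb, hyc⟩ := hn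
    have da := (hy a (by simp)).resolve_left (fun h => hya h.symm)
    have db := (hy b (by simp)).resolve_left (fun h => hyb h.symm)
    have dc := (hy c (by simp)).resolve_left (fun h => hyc h.symm)
    have hd : Disjoint (a.1 ∪ b.1 ∪ c.1) y.1 := by
      rw [Finset.disjoint_union_left, Finset.disjoint_union_left]
      exact ⟨⟨da, db⟩, dc⟩
    rw [huniv] at hd
    have hy0 : y.1 = ∅ :=
      Finset.eq_empty_iff_forall_notMem.mpr
        (fun z hz => (Finset.disjoint_left.mp hd) (Finset.mem_univ z) hz)
    have := y.2
    simp [hy0] at this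
  · rintro (rfl | rfl | rfl) <;> intro x hx <;>
      rcases hx with rfl | rfl | rfl <;>
      first
      | exact Or.inl rfl
      | exact Or.inr hab
      | exact Or.inr hac
      | exact Or.inr hbc
      | exact Or.inr hab.symm
      | exact Or.inr hac.symm
      | exact Or.inr hbc.symm

lemma mem_of_card_three {S : Finset (Fin 6)} (hS : S.card = 3) {a b c : Edge}
    (nab : a ≠ b) (nac : a ≠ c) (nbc : b ≠ c)
    (ha : a.1 ⊆ S) (hb : b.1 ⊆ S) (hc : c.1 ⊆ S)
    {d : Edge} (hd : d.1 ⊆ S) : d = a ∨ d = b ∨ d = c := by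
  have vab : a.1 ≠ b.1 := fun h => nab (Subtype.ext h)
  have vac : a.1 ≠ c.1 := fun h => nac (Subtype.ext h)
  have vbc : b.1 ≠ c.1 := fun h => nbc (Subtype.ext h)
  have hsub : ({a.1, b.1, c.1} : Finset (Finset (Fin 6))) ⊆ S.powersetCard 2 := by
    intro t ht
    simp only [Finset.mem_insert, Finset.mem_singleton] at ht
    rcases ht with rfl|rfl|rfl <;> rw [Finset.mem_powersetCard]
    exacts [⟨ha, a.2⟩, ⟨hb, b.2⟩, ⟨hc, c.2⟩]
  have hcard : ({a.1, b.1, c.1} : Finset (Finset (Fin 6))).card = 3 := by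
    rw [Finset.card_insert_of_notMem (by simp [vab, vac]),
        Finset.card_insert_of_notMem (by simp [vbc]), Finset.card_singleton]
  have heq : ({a.1,b.1,c.1} : Finset (Finset (Fin 6))) = S.powersetCard 2 :=
    Finset.eq_of_subset_of_card_le hsub
      (by rw [Finset.card_powersetCard, hS, hcard]; decide)
  have hmem : d.1 ∈ S.powersetCard 2 := Finset.mem_powersetCard.mpr ⟨hd, d.2⟩
  rw [← heq] at hmem
  simp only [Finset.mem_insert, Finset.mem_singleton] at hmem
  rcases hmem with h|h|h
  exacts [Or.inl (Subtype.ext h), Or.inr (Or.inl (Subtype.ext h)), Or.inr (Or.inr (Subtype.ext h))]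

lemma triangle_line {a b c u v w : Edge} {S : Finset (Fin 6)}
    (iab : ¬ Disjoint a.1 b.1) (iac : ¬ Disjoint a.1 c.1) (ibc : ¬ Disjoint b.1 c.1)
    (nab : a ≠ b) (nac : a ≠ c) (nbc : b ≠ c)
    (hcov : a.1 ∪ b.1 ∪ c.1 = S) (hS : S.card = 3)
    (hu : Disjoint u.1 S) (hv : Disjoint v.1 S) (hw : Disjoint w.1 S)
    (nuv : u ≠ v) (nuw : u ≠ w) (nvw : v ≠ w) :
    IsCompleteTriad {a,b,c} ∧ perp {a,b,c} = {u,v,w} := by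
  have haS : a.1 ⊆ S := by rw [← hcov]; intro z hz; simp [Finset.mem_union, hz]
  have hbS : b.1 ⊆ S := by rw [← hcov]; intro z hz; simp [Finset.mem_union, hz]
  have hcS : c.1 ⊆ S := by rw [← hcov]; intro z hz; simp [Finset.mem_union, hz]
  have hSc : (Sᶜ).card = 3 := by
    rw [Finset.card_compl, hS, Fintype.card_fin]
  constructor
  · refine ⟨⟨Set.ncard_eq_three.mpr ⟨a,b,c,nab,nac,nbc,rfl⟩, ?_⟩, ?_⟩
    · intro x hx y hy hxy
      simp only [Set.mem_insert_iff, Set.mem_singleton_iff] at hx hy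
      rcases hx with rfl|rfl|rfl <;> rcases hy with rfl|rfl|rfl <;>
        first
        | exact absurd rfl hxy
        | exact iab
        | exact iac
        | exact ibc
        | exact fun h => iab h.symm
        | exact fun h => iac h.symm
        | exact fun h => ibc h.symm
    · rintro ⟨U, hTU, hU4, hUp⟩
      have hex : ∃ d ∈ U, d ∉ ({a,b,c} : Set Edge) := by
        by_contra hcon
        push_neg at hcon
        have hsub : U ⊆ ({a,b,c} : Set Edge) := hcon
        have hle := Set.ncard_le_ncard hsub (Set.toFinite _)
        rw [hU4, Set.ncard_eq_three.mpr ⟨a,b,c,nab,nac,nbc,rfl⟩] at hle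
        omega
      obtain ⟨d, hdU, hdT⟩ := hex
      have hda : d ≠ a := fun h => hdT (by simp [h])
      have hdb : d ≠ b := fun h => hdT (by simp [h])
      have hdc : d ≠ c := fun h => hdT (by simp [h])
      have ida : ¬ Disjoint d.1 a.1 := hUp hdU (hTU (by simp)) hda
      by_cases hdS : d.1 ⊆ S
      · rcases mem_of_card_three hS nab nac nbc haS hbS hcS hdS with rfl|rfl|rfl <;>
          simp at hdT
      · obtain ⟨t, htd, htS⟩ := Finset.not_subset.mp hdS
        have h1 : (S ∩ d.1).card ≤ 1 := by
          have hsub : S ∩ d.1 ⊆ d.1.erase t := by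
            intro z hz
            rw [Finset.mem_inter] at hz
            exact Finset.mem_erase.mpr ⟨fun hzt => htS (hzt ▸ hz.1), hz.2⟩
          calc (S ∩ d.1).card ≤ (d.1.erase t).card := Finset.card_le_card hsub
            _ = 1 := by rw [Finset.card_erase_of_mem htd, d.2]
        have h2 : 2 ≤ (S \ d.1).card := by
          have := Finset.card_sdiff_add_card_inter S d.1
          omega
        obtain ⟨e', he'sub, he'card⟩ := Finset.exists_subset_card_eq (s := S \ d.1) (n := 2) h2
        have he'S : (⟨e', he'card⟩ : Edge).1 ⊆ S :=
          he'sub.trans (Finset.sdiff_subset)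
        have he'd : Disjoint d.1 e' := Finset.disjoint_right.mpr
          (fun z hz => (Finset.mem_sdiff.mp (he'sub hz)).2)
        rcases mem_of_card_three hS nab nac nbc haS hbS hcS he'S with h|h|h
        · exact ida (h ▸ he'd)
        · exact (hUp hdU (hTU (by simp)) hdb) (h ▸ he'd)
        · exact (hUp hdU (hTU (by simp)) hdc) (h ▸ he'd)
  · ext y
    simp only [perp, Set.mem_setOf_eq, Set.mem_insert_iff, Set.mem_singleton_iff]
    constructor
    · intro hy
      have hya : y ≠ a := by
        rintro rfl
        rcases hy b (by simp) with h | h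
        · exact nab h.symm
        · exact iab h.symm
      have hyb : y ≠ b := by
        rintro rfl
        rcases hy a (by simp) with h | h
        · exact nab h
        · exact iab h
      have hyc : y ≠ c := by
        rintro rfl
        rcases hy a (by simp) with h | h
        · exact nac h
        · exact iac h
      have da := (hy a (by simp)).resolve_left (fun h => hya h.symm)
      have db := (hy b (by simp)).resolve_left (fun h => hyb h.symm)
      have dc := (hy c (by simp)).resolve_left (fun h => hyc h.symm)
      have hdS : Disjoint y.1 S := by
        rw [← hcov, Finset.disjoint_union_right, Finset.disjoint_union_right]
        exact ⟨⟨da.symm, db.symm⟩, dc.symm⟩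
      exact mem_of_card_three hSc nuv nuw nvw (subset_compl_of_disjoint hu)
        (subset_compl_of_disjoint hv) (subset_compl_of_disjoint hw)
        (subset_compl_of_disjoint hdS)
    · rintro (rfl | rfl | rfl) <;> intro x hx <;>
        rcases hx with rfl | rfl | rfl <;>
        refine Or.inr ?_
      · exact (hu.symm.mono_left haS)
      · exact (hu.symm.mono_left hbS)
      · exact (hu.symm.mono_left hcS)
      · exact (hv.symm.mono_left haS)
      · exact (hv.symm.mono_left hbS)
      · exact (hv.symm.mono_left hcS)
      · exact (hw.symm.mono_left haS)
      · exact (hw.symm.mono_left hbS)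
      · exact (hw.symm.mono_left hcS)

lemma adj_mk {a b c u v w : Edge} (pa : a = u ∨ Disjoint a.1 u.1) (pb : b = v ∨ Disjoint b.1 v.1)
    (hT : IsFactor {a,b,c} ∨ IsCompleteTriad {a,b,c})
    (hperp : perp {a,b,c} = {u,v,w})
    (hab : a ≠ b) (hac : a ≠ c) (hbc : b ≠ c)
    (huv : u ≠ v) (huw : u ≠ w) (hvw : v ≠ w) :
    NG.Adj ⟨(a,u), pa⟩ ⟨(b,v), pb⟩ := by
  classical
  set σ : Edge → Edge := fun e => if e = a then u else if e = b then v else w with hσ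
  have hσa : σ a = u := by simp [hσ]
  have hσb : σ b = v := by simp [hσ, Ne.symm hab]
  have hσc : σ c = w := by simp [hσ, Ne.symm hac, Ne.symm hbc]
  refine ⟨?_, {p : NPoint | p.1.1 ∈ ({a,b,c} : Set Edge) ∧ p.1.2 = σ p.1.1},
    ⟨{a,b,c}, σ, hT, ?_, rfl⟩, ⟨by simp, hσa.symm⟩, ⟨by simp, hσb.symm⟩⟩
  · intro h
    exact hab (congrArg (fun q => q.1.1) h)
  · rw [hperp]
    refine ⟨?_, ?_, ?_⟩
    · intro e he
      simp only [Set.mem_insert_iff, Set.mem_singleton_iff] at he ⊢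
      rcases he with rfl|rfl|rfl
      · rw [hσa]; tauto
      · rw [hσb]; tauto
      · rw [hσc]; tauto
    · intro e he f hf hef
      simp only [Set.mem_insert_iff, Set.mem_singleton_iff] at he hf
      rcases he with rfl|rfl|rfl <;> rcases hf with rfl|rfl|rfl
      all_goals try simp only [hσa, hσb, hσc] at hef
      all_goals first
      | rfl
      | exact absurd hef huv
      | exact absurd hef huw
      | exact absurd hef hvw
      | exact absurd hef.symm huv
      | exact absurd hef.symm huw
      | exact absurd hef.symm hvw
    · intro z hz
      simp only [Set.mem_insert_iff, Set.mem_singleton_iff] at hz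
      rcases hz with rfl|rfl|rfl
      · exact ⟨a, by simp, hσa⟩
      · exact ⟨b, by simp, hσb⟩
      · exact ⟨c, by simp, hσc⟩

lemma adjF {a b c u v w : Edge}
    (dab : Disjoint a.1 b.1) (dac : Disjoint a.1 c.1) (dbc : Disjoint b.1 c.1)
    (huniv : a.1 ∪ b.1 ∪ c.1 = Finset.univ)
    (hperm : ({u,v,w} : Set Edge) = {a,b,c})
    (nuv : u ≠ v) (nuw : u ≠ w) (nvw : v ≠ w)
    (pa : a = u ∨ Disjoint a.1 u.1) (pb : b = v ∨ Disjoint b.1 v.1) :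
    NG.Adj ⟨(a,u), pa⟩ ⟨(b,v), pb⟩ :=
  adj_mk pa pb (Or.inl (isFactor_mk dab dac dbc))
    ((perp_factor dab dac dbc huniv).trans hperm.symm)
    (edge_ne_of_disjoint dab) (edge_ne_of_disjoint dac) (edge_ne_of_disjoint dbc) nuv nuw nvw

lemma adjT {a b c u v w : Edge} {S : Finset (Fin 6)}
    (iab : ¬ Disjoint a.1 b.1) (iac : ¬ Disjoint a.1 c.1) (ibc : ¬ Disjoint b.1 c.1)
    (nab : a ≠ b) (nac : a ≠ c) (nbc : b ≠ c)
    (hcov : a.1 ∪ b.1 ∪ c.1 = S) (hS : S.card = 3)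
    (hu : Disjoint u.1 S) (hv : Disjoint v.1 S) (hw : Disjoint w.1 S)
    (nuv : u ≠ v) (nuw : u ≠ w) (nvw : v ≠ w)
    (pa : a = u ∨ Disjoint a.1 u.1) (pb : b = v ∨ Disjoint b.1 v.1) :
    NG.Adj ⟨(a,u), pa⟩ ⟨(b,v), pb⟩ :=
  adj_mk pa pb
    (Or.inr (triangle_line iab iac ibc nab nac nbc hcov hS hu hv hw nuv nuw nvw).1)
    (triangle_line iab iac ibc nab nac nbc hcov hS hu hv hw nuv nuw nvw).2
    nab nac nbc nuv nuw nvw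

lemma two_le {α β γ₁ γ₂ : NPoint} (hne : γ₁ ≠ γ₂)
    (h1a : NG.Adj γ₁ α) (h1b : NG.Adj γ₁ β) (h2a : NG.Adj γ₂ α) (h2b : NG.Adj γ₂ β) :
    2 ≤ {γ : NPoint | NG.Adj γ α ∧ NG.Adj γ β}.ncard := by
  have : Finite NPoint := by unfold NPoint; infer_instance
  exact (Set.one_lt_ncard_iff (Set.toFinite _)).mpr ⟨γ₁, γ₂, ⟨h1a, h1b⟩, ⟨h2a, h2b⟩, hne⟩

lemma npoint_ne_of_fst {e f g h : Edge} {p q} (hne : e ≠ g) :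
    (⟨(e,f),p⟩ : NPoint) ≠ ⟨(g,h),q⟩ := fun hh => hne (congrArg (fun r => r.1.1) hh)

lemma npoint_ne_of_snd {e f g h : Edge} {p q} (hne : f ≠ h) :
    (⟨(e,f),p⟩ : NPoint) ≠ ⟨(g,h),q⟩ := fun hh => hne (congrArg (fun r => r.1.2) hh)

lemma not_disjoint_of_mem {s t : Finset (Fin 6)} {z : Fin 6} (hz : z ∈ s) (hz' : z ∈ t) :
    ¬ Disjoint s t := fun hd => (Finset.disjoint_left.mp hd) hz hz'

lemma edge_ne_of_mem_not_mem {e f : Edge} {t : Fin 6} (ht : t ∈ e.1) (ht' : t ∉ f.1) :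
    e ≠ f := fun h => ht' (h ▸ ht)

lemma univ3_of {a b c d e f : Edge} (h : a.1 ∪ b.1 ∪ c.1 = Finset.univ)
    (himp : ∀ z : Fin 6, z ∈ a.1 ∨ z ∈ b.1 ∨ z ∈ c.1 → z ∈ d.1 ∨ z ∈ e.1 ∨ z ∈ f.1) :
    d.1 ∪ e.1 ∪ f.1 = Finset.univ := by
  apply Finset.eq_univ_iff_forall.mpr
  intro z
  have hz := Finset.eq_univ_iff_forall.mp h z
  simp only [Finset.mem_union, or_assoc] at hz ⊢
  exact himp z hz

lemma univ_of_three {a b c : Edge} (hab : Disjoint a.1 b.1) (hac : Disjoint a.1 c.1)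
    (hbc : Disjoint b.1 c.1) : a.1 ∪ b.1 ∪ c.1 = Finset.univ := by
  apply Finset.eq_univ_of_card
  rw [Finset.card_union_of_disjoint (Finset.disjoint_union_left.mpr ⟨hac, hbc⟩),
    Finset.card_union_of_disjoint hab, a.2, b.2, c.2, Fintype.card_fin]

lemma cov_of {a b c : Edge} {S : Finset (Fin 6)}
    (h : ∀ z, z ∈ a.1 ∨ z ∈ b.1 ∨ z ∈ c.1 ↔ z ∈ S) : a.1 ∪ b.1 ∪ c.1 = S := by
  ext z
  simp only [Finset.mem_union, or_assoc]
  exact h z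

set_option maxHeartbeats 1000000 in
/-- If `α = (x,u)` and `β = (y,v)` are distinct non-collinear points of 𝓢 with
either `x = y, u ≠ v` or `x ≠ y, u = v`, then `|{α,β}^⊥| ≥ 2`. -/
theorem statement2 (α β : NPoint) (h : α ≠ β) (hnc : ¬ NG.Adj α β)
    (hcase : (α.1.1 = β.1.1 ∧ α.1.2 ≠ β.1.2) ∨ (α.1.1 ≠ β.1.1 ∧ α.1.2 = β.1.2)) :
    2 ≤ {γ : NPoint | NG.Adj γ α ∧ NG.Adj γ β}.ncard := by
  obtain ⟨⟨x,u⟩, hα⟩ := α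
  obtain ⟨⟨y,v⟩, hβ⟩ := β
  rcases hcase with ⟨hxy, huv⟩ | ⟨hxy, huv⟩
  · -- Case 1 : x = y, u ≠ v
    have hxy' : x = y := hxy
    subst hxy'
    have huv' : u ≠ v := huv
    by_cases hxu : x = u
    · -- α = (x,x)
      subst hxu
      have hdv : Disjoint x.1 v.1 := hβ.resolve_left huv'
      have dxt := cedge_disj_left x v hdv
      have dvt := cedge_disj_right x v hdv
      have hun := cedge_union x v hdv
      refine two_le (γ₁ := ⟨(v, cedge x v hdv), Or.inr dvt⟩)
        (γ₂ := ⟨(cedge x v hdv, cedge x v hdv), Or.inl rfl⟩)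
        (npoint_ne_of_fst (edge_ne_of_disjoint dvt)) ?_ ?_ ?_ ?_
      · exact adjF hdv.symm dvt dxt (univ3_of hun (fun z hz => by tauto))
          (by ext z; simp only [Set.mem_insert_iff, Set.mem_singleton_iff]; try tauto)
          (edge_ne_of_disjoint dxt).symm (edge_ne_of_disjoint dvt).symm
          huv' (Or.inr dvt) hα
      · exact adjF hdv.symm dvt dxt (univ3_of hun (fun z hz => by tauto))
          (by ext z; simp only [Set.mem_insert_iff, Set.mem_singleton_iff]; try tauto)
          (edge_ne_of_disjoint dvt).symm (edge_ne_of_disjoint dxt).symm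
          (fun hh => huv' hh.symm) (Or.inr dvt) hβ
      · exact adjF dxt.symm dvt.symm hdv (univ3_of hun (fun z hz => by tauto))
          (by ext z; simp only [Set.mem_insert_iff, Set.mem_singleton_iff]; try tauto)
          (edge_ne_of_disjoint dxt.symm) (edge_ne_of_disjoint dvt.symm)
          (edge_ne_of_disjoint hdv) (Or.inl rfl) hα
      · exact adjF dxt.symm dvt.symm hdv (univ3_of hun (fun z hz => by tauto))
          (by ext z; simp only [Set.mem_insert_iff, Set.mem_singleton_iff]; try tauto)
          (edge_ne_of_disjoint dvt.symm) (edge_ne_of_disjoint dxt.symm)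
          (fun hh => huv' hh.symm) (Or.inl rfl) hβ
    · have hdu : Disjoint x.1 u.1 := hα.resolve_left hxu
      by_cases hxv : x = v
      · -- β = (x,x)
        subst hxv
        have dxs := cedge_disj_left x u hdu
        have dus := cedge_disj_right x u hdu
        have hun := cedge_union x u hdu
        refine two_le (γ₁ := ⟨(u, cedge x u hdu), Or.inr dus⟩)
          (γ₂ := ⟨(cedge x u hdu, cedge x u hdu), Or.inl rfl⟩)
          (npoint_ne_of_fst (edge_ne_of_disjoint dus)) ?_ ?_ ?_ ?_
        · exact adjF hdu.symm dus dxs (univ3_of hun (fun z hz => by tauto))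
            (by ext z; simp only [Set.mem_insert_iff, Set.mem_singleton_iff]; try tauto)
            (edge_ne_of_disjoint dus).symm (edge_ne_of_disjoint dxs).symm
            (fun hh => hxu hh.symm) (Or.inr dus) hα
        · exact adjF hdu.symm dus dxs (univ3_of hun (fun z hz => by tauto))
            (by ext z; simp only [Set.mem_insert_iff, Set.mem_singleton_iff]; try tauto)
            (edge_ne_of_disjoint dxs).symm (edge_ne_of_disjoint dus).symm
            hxu (Or.inr dus) hβ
        · exact adjF dxs.symm dus.symm hdu (univ3_of hun (fun z hz => by tauto))
            (by ext z; simp only [Set.mem_insert_iff, Set.mem_singleton_iff]; try tauto)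
            (edge_ne_of_disjoint dus.symm) (edge_ne_of_disjoint dxs.symm)
            (fun hh => hxu hh.symm) (Or.inl rfl) hα
        · exact adjF dxs.symm dus.symm hdu (univ3_of hun (fun z hz => by tauto))
            (by ext z; simp only [Set.mem_insert_iff, Set.mem_singleton_iff]; try tauto)
            (edge_ne_of_disjoint dxs.symm) (edge_ne_of_disjoint dus.symm)
            hxu (Or.inl rfl) hβ
      · have hdv : Disjoint x.1 v.1 := hβ.resolve_left hxv
        by_cases hduv : Disjoint u.1 v.1
        · -- factor {x,u,v}
          have hun := univ_of_three hdu hdv hduv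
          refine two_le (γ₁ := ⟨(u, x), Or.inr hdu.symm⟩)
            (γ₂ := ⟨(v, x), Or.inr hdv.symm⟩)
            (npoint_ne_of_fst huv') ?_ ?_ ?_ ?_
          · exact adjF hdu.symm hduv hdv (univ3_of hun (fun z hz => by tauto))
              (by ext z; simp only [Set.mem_insert_iff, Set.mem_singleton_iff]; try tauto)
              hxu hxv huv' (Or.inr hdu.symm) hα
          · exact adjF hdu.symm hduv hdv (univ3_of hun (fun z hz => by tauto))
              (by ext z; simp only [Set.mem_insert_iff, Set.mem_singleton_iff]; try tauto)
              hxv hxu (fun hh => huv' hh.symm) (Or.inr hdu.symm) hβ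
          · exact adjF hdv.symm hduv.symm hdu (univ3_of hun (fun z hz => by tauto))
              (by ext z; simp only [Set.mem_insert_iff, Set.mem_singleton_iff]; try tauto)
              hxu hxv huv' (Or.inr hdv.symm) hα
          · exact adjF hdv.symm hduv.symm hdu (univ3_of hun (fun z hz => by tauto))
              (by ext z; simp only [Set.mem_insert_iff, Set.mem_singleton_iff]; try tauto)
              hxv hxu (fun hh => huv' hh.symm) (Or.inr hdv.symm) hβ
        · -- triangle case 1(b)
          have hcap : (u.1 ∩ v.1).card = 1 := by
            have hle : (u.1 ∩ v.1).card ≤ 2 := by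
              calc (u.1 ∩ v.1).card ≤ u.1.card := Finset.card_le_card Finset.inter_subset_left
                _ = 2 := u.2
            have hpos : 0 < (u.1 ∩ v.1).card :=
              Finset.card_pos.mpr (Finset.not_disjoint_iff_nonempty_inter.mp hduv)
            have hne2 : (u.1 ∩ v.1).card ≠ 2 := by
              intro h2
              have he1 : u.1 ∩ v.1 = u.1 := Finset.eq_of_subset_of_card_le
                Finset.inter_subset_left (by rw [h2, u.2])
              have hsub : u.1 ⊆ v.1 := by rw [← he1]; exact Finset.inter_subset_right
              exact huv' (Subtype.ext (Finset.eq_of_subset_of_card_le hsub (by rw [u.2, v.2])))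
            omega
          have hcup3 : (u.1 ∪ v.1).card = 3 := by
            have hh := Finset.card_union_add_card_inter u.1 v.1
            rw [u.2, v.2, hcap] at hh; omega
          have hdxuv : Disjoint x.1 (u.1 ∪ v.1) := Finset.disjoint_union_right.mpr ⟨hdu, hdv⟩
          have hs1 : ((x.1 ∪ (u.1 ∪ v.1))ᶜ).card = 1 := by
            rw [Finset.card_compl, Finset.card_union_of_disjoint hdxuv, x.2, hcup3,
              Fintype.card_fin]
          obtain ⟨s, hs⟩ := Finset.card_eq_one.mp hs1
          have hsnot : s ∉ x.1 ∪ (u.1 ∪ v.1) := by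
            apply Finset.mem_compl.mp; rw [hs]; exact Finset.mem_singleton_self s
          rw [Finset.mem_union, Finset.mem_union] at hsnot
          push_neg at hsnot
          obtain ⟨hsx, hsu, hsv⟩ := hsnot
          obtain ⟨a, b, hab', hx⟩ := Finset.card_eq_two.mp x.2
          have hax : a ∈ x.1 := by rw [hx]; simp
          have hbx : b ∈ x.1 := by rw [hx]; simp
          have hsa : a ≠ s := fun hh => hsx (hh ▸ hax)
          have hsb : b ≠ s := fun hh => hsx (hh ▸ hbx)
          set e₁ : Edge := ⟨{a,s}, by
            rw [Finset.card_insert_of_notMem (by simp [hsa]), Finset.card_singleton]⟩ with he₁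
          set e₂ : Edge := ⟨{b,s}, by
            rw [Finset.card_insert_of_notMem (by simp [hsb]), Finset.card_singleton]⟩ with he₂
          set zE : Edge := ⟨(u.1 ∪ v.1) \ (u.1 ∩ v.1), by
            rw [Finset.card_sdiff_of_subset (Finset.inter_subset_left.trans Finset.subset_union_left),
              hcup3, hcap]⟩ with hzE
          obtain ⟨p, hp⟩ := Finset.card_eq_one.mp hcap
          have hpuv : p ∈ u.1 ∩ v.1 := by rw [hp]; simp
          have hpu : p ∈ u.1 := (Finset.mem_inter.mp hpuv).1
          have hpv : p ∈ v.1 := (Finset.mem_inter.mp hpuv).2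
          have hpz : p ∉ zE.1 := by
            rw [hzE]; intro hh
            exact (Finset.mem_sdiff.mp hh).2 hpuv
          have nzu : zE ≠ u := fun hh => hpz (by rw [hh]; exact hpu)
          have nzv : zE ≠ v := fun hh => hpz (by rw [hh]; exact hpv)
          have hzsub : zE.1 ⊆ u.1 ∪ v.1 := by rw [hzE]; exact Finset.sdiff_subset
          set S3 : Finset (Fin 6) := insert s x.1 with hS3def
          have hS3 : S3.card = 3 := by
            rw [hS3def, Finset.card_insert_of_notMem hsx, x.2]
          have hdUS : Disjoint u.1 S3 := by
            rw [hS3def, Finset.disjoint_insert_right]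
            exact ⟨hsu, hdu.symm⟩
          have hdVS : Disjoint v.1 S3 := by
            rw [hS3def, Finset.disjoint_insert_right]
            exact ⟨hsv, hdv.symm⟩
          have hdZS : Disjoint zE.1 S3 := by
            rw [hS3def, Finset.disjoint_insert_right]
            constructor
            · intro hszE
              rcases Finset.mem_union.mp (hzsub hszE) with hh | hh
              exacts [hsu hh, hsv hh]
            · exact ((Finset.disjoint_union_left.mpr ⟨hdu.symm, hdv.symm⟩).mono_left hzsub)
          have hae₁ : a ∈ e₁.1 := by rw [he₁]; simp
          have hse₁ : s ∈ e₁.1 := by rw [he₁]; simp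
          have hbe₂ : b ∈ e₂.1 := by rw [he₂]; simp
          have hse₂ : s ∈ e₂.1 := by rw [he₂]; simp
          have hane₂ : a ∉ e₂.1 := by rw [he₂]; simp [hab', hsa]
          have hbne₁ : b ∉ e₁.1 := by rw [he₁]; simp [Ne.symm hab', hsb]
          have ne₁x : e₁ ≠ x := edge_ne_of_mem_not_mem hse₁ hsx
          have ne₂x : e₂ ≠ x := edge_ne_of_mem_not_mem hse₂ hsx
          have ne₁e₂ : e₁ ≠ e₂ := edge_ne_of_mem_not_mem hae₁ hane₂
          have i₁x : ¬ Disjoint e₁.1 x.1 := not_disjoint_of_mem hae₁ hax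
          have i₂x : ¬ Disjoint e₂.1 x.1 := not_disjoint_of_mem hbe₂ hbx
          have i₁₂ : ¬ Disjoint e₁.1 e₂.1 := not_disjoint_of_mem hse₁ hse₂
          have hcov1 : e₁.1 ∪ x.1 ∪ e₂.1 = S3 := cov_of (fun z => by
            rw [he₁, he₂, hS3def]
            simp only [hx, Finset.mem_insert, Finset.mem_singleton]
            tauto)
          have hcov2 : e₂.1 ∪ x.1 ∪ e₁.1 = S3 := cov_of (fun z => by
            rw [he₁, he₂, hS3def]
            simp only [hx, Finset.mem_insert, Finset.mem_singleton]
            tauto)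
          have hd1uv : Disjoint e₁.1 (u.1 ∪ v.1) := by
            rw [he₁]
            refine Finset.disjoint_left.mpr ?_
            intro t ht
            simp only [Finset.mem_insert, Finset.mem_singleton] at ht
            rcases ht with rfl | rfl
            · exact fun hh => Finset.disjoint_left.mp hdxuv hax hh
            · intro hh
              rcases Finset.mem_union.mp hh with h' | h'
              exacts [hsu h', hsv h']
          have hd2uv : Disjoint e₂.1 (u.1 ∪ v.1) := by
            rw [he₂]
            refine Finset.disjoint_left.mpr ?_
            intro t ht
            simp only [Finset.mem_insert, Finset.mem_singleton] at ht
            rcases ht with rfl | rfl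
            · exact fun hh => Finset.disjoint_left.mp hdxuv hbx hh
            · intro hh
              rcases Finset.mem_union.mp hh with h' | h'
              exacts [hsu h', hsv h']
          have pd1 : Disjoint e₁.1 zE.1 := hd1uv.mono_right hzsub
          have pd2 : Disjoint e₂.1 zE.1 := hd2uv.mono_right hzsub
          refine two_le (γ₁ := ⟨(e₁, zE), Or.inr pd1⟩) (γ₂ := ⟨(e₂, zE), Or.inr pd2⟩)
            (npoint_ne_of_fst ne₁e₂) ?_ ?_ ?_ ?_
          · exact adjT i₁x i₁₂ (fun hh => i₂x hh.symm) ne₁x ne₁e₂ ne₂x.symm hcov1 hS3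
              hdZS hdUS hdVS nzu nzv huv' (Or.inr pd1) hα
          · exact adjT i₁x i₁₂ (fun hh => i₂x hh.symm) ne₁x ne₁e₂ ne₂x.symm hcov1 hS3
              hdZS hdVS hdUS nzv nzu (fun hh => huv' hh.symm) (Or.inr pd1) hβ
          · exact adjT i₂x (fun hh => i₁₂ hh.symm) (fun hh => i₁x hh.symm) ne₂x ne₁e₂.symm
              ne₁x.symm hcov2 hS3 hdZS hdUS hdVS nzu nzv huv' (Or.inr pd2) hα
          · exact adjT i₂x (fun hh => i₁₂ hh.symm) (fun hh => i₁x hh.symm) ne₂x ne₁e₂.symm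
              ne₁x.symm hcov2 hS3 hdZS hdVS hdUS nzv nzu (fun hh => huv' hh.symm)
              (Or.inr pd2) hβ
  · -- Case 2 : x ≠ y, u = v
    have hxy' : x ≠ y := hxy
    have huv' : u = v := huv
    subst huv'
    by_cases hxu : x = u
    · -- α = (x,x), β = (y,x)
      subst hxu
      have hdyx : Disjoint y.1 x.1 := hβ.resolve_left (fun hh => hxy' hh.symm)
      have hdxy : Disjoint x.1 y.1 := hdyx.symm
      have dxt := cedge_disj_left x y hdxy
      have dyt := cedge_disj_right x y hdxy
      have hun := cedge_union x y hdxy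
      refine two_le (γ₁ := ⟨(cedge x y hdxy, y), Or.inr dyt.symm⟩)
        (γ₂ := ⟨(cedge x y hdxy, cedge x y hdxy), Or.inl rfl⟩)
        (npoint_ne_of_snd (edge_ne_of_disjoint dyt)) ?_ ?_ ?_ ?_
      · exact adjF dxt.symm dyt.symm hdxy (univ3_of hun (fun z hz => by tauto))
          (by ext z; simp only [Set.mem_insert_iff, Set.mem_singleton_iff]; try tauto)
          (fun hh => hxy' hh.symm) (edge_ne_of_disjoint dyt) (edge_ne_of_disjoint dxt)
          (Or.inr dyt.symm) hα
      · exact adjF dyt.symm dxt.symm hdyx (univ3_of hun (fun z hz => by tauto))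
          (by ext z; simp only [Set.mem_insert_iff, Set.mem_singleton_iff]; try tauto)
          (fun hh => hxy' hh.symm) (edge_ne_of_disjoint dyt) (edge_ne_of_disjoint dxt)
          (Or.inr dyt.symm) hβ
      · exact adjF dxt.symm dyt.symm hdxy (univ3_of hun (fun z hz => by tauto))
          (by ext z; simp only [Set.mem_insert_iff, Set.mem_singleton_iff]; try tauto)
          (edge_ne_of_disjoint dxt).symm (edge_ne_of_disjoint dyt).symm hxy'
          (Or.inl rfl) hα
      · exact adjF dyt.symm dxt.symm hdyx (univ3_of hun (fun z hz => by tauto))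
          (by ext z; simp only [Set.mem_insert_iff, Set.mem_singleton_iff]; try tauto)
          (edge_ne_of_disjoint dxt).symm (edge_ne_of_disjoint dyt).symm hxy'
          (Or.inl rfl) hβ
    · by_cases hyu : y = u
      · -- α = (x,y), β = (y,y)
        subst hyu
        have hdxy : Disjoint x.1 y.1 := hα.resolve_left hxy'
        have dxt := cedge_disj_left x y hdxy
        have dyt := cedge_disj_right x y hdxy
        have hun := cedge_union x y hdxy
        refine two_le (γ₁ := ⟨(cedge x y hdxy, x), Or.inr dxt.symm⟩)
          (γ₂ := ⟨(cedge x y hdxy, cedge x y hdxy), Or.inl rfl⟩)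
          (npoint_ne_of_snd (edge_ne_of_disjoint dxt)) ?_ ?_ ?_ ?_
        · exact adjF dxt.symm dyt.symm hdxy (univ3_of hun (fun z hz => by tauto))
            (by ext z; simp only [Set.mem_insert_iff, Set.mem_singleton_iff]; try tauto)
            hxy' (edge_ne_of_disjoint dxt) (edge_ne_of_disjoint dyt)
            (Or.inr dxt.symm) hα
        · exact adjF dyt.symm dxt.symm hdxy.symm (univ3_of hun (fun z hz => by tauto))
            (by ext z; simp only [Set.mem_insert_iff, Set.mem_singleton_iff]; try tauto)
            hxy' (edge_ne_of_disjoint dxt) (edge_ne_of_disjoint dyt)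
            (Or.inr dxt.symm) hβ
        · exact adjF dxt.symm dyt.symm hdxy (univ3_of hun (fun z hz => by tauto))
            (by ext z; simp only [Set.mem_insert_iff, Set.mem_singleton_iff]; try tauto)
            (edge_ne_of_disjoint dyt).symm (edge_ne_of_disjoint dxt).symm
            (fun hh => hxy' hh.symm) (Or.inl rfl) hα
        · exact adjF dyt.symm dxt.symm hdxy.symm (univ3_of hun (fun z hz => by tauto))
            (by ext z; simp only [Set.mem_insert_iff, Set.mem_singleton_iff]; try tauto)
            (edge_ne_of_disjoint dyt).symm (edge_ne_of_disjoint dxt).symm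
            (fun hh => hxy' hh.symm) (Or.inl rfl) hβ
      · have hdxu : Disjoint x.1 u.1 := hα.resolve_left hxu
        have hdyu : Disjoint y.1 u.1 := hβ.resolve_left hyu
        by_cases hidxy : Disjoint x.1 y.1
        · -- factor {x,y,u}
          have hun := univ_of_three hidxy hdxu hdyu
          refine two_le (γ₁ := ⟨(u, x), Or.inr hdxu.symm⟩)
            (γ₂ := ⟨(u, y), Or.inr hdyu.symm⟩)
            (npoint_ne_of_snd hxy') ?_ ?_ ?_ ?_
          · exact adjF hdxu.symm hdyu.symm hidxy (univ3_of hun (fun z hz => by tauto))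
              (by ext z; simp only [Set.mem_insert_iff, Set.mem_singleton_iff]; try tauto)
              hxu hxy' (fun hh => hyu hh.symm) (Or.inr hdxu.symm) hα
          · exact adjF hdyu.symm hdxu.symm hidxy.symm (univ3_of hun (fun z hz => by tauto))
              (by ext z; simp only [Set.mem_insert_iff, Set.mem_singleton_iff]; try tauto)
              hxu hxy' (fun hh => hyu hh.symm) (Or.inr hdxu.symm) hβ
          · exact adjF hdxu.symm hdyu.symm hidxy (univ3_of hun (fun z hz => by tauto))
              (by ext z; simp only [Set.mem_insert_iff, Set.mem_singleton_iff]; try tauto)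
              hyu (fun hh => hxy' hh.symm) (fun hh => hxu hh.symm) (Or.inr hdyu.symm) hα
          · exact adjF hdyu.symm hdxu.symm hidxy.symm (univ3_of hun (fun z hz => by tauto))
              (by ext z; simp only [Set.mem_insert_iff, Set.mem_singleton_iff]; try tauto)
              hyu (fun hh => hxy' hh.symm) (fun hh => hxu hh.symm) (Or.inr hdyu.symm) hβ
        · -- triangle case 2(b)
          have hcapxy : (x.1 ∩ y.1).card = 1 := by
            have hle : (x.1 ∩ y.1).card ≤ 2 := by
              calc (x.1 ∩ y.1).card ≤ x.1.card := Finset.card_le_card Finset.inter_subset_left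
                _ = 2 := x.2
            have hpos : 0 < (x.1 ∩ y.1).card :=
              Finset.card_pos.mpr (Finset.not_disjoint_iff_nonempty_inter.mp hidxy)
            have hne2 : (x.1 ∩ y.1).card ≠ 2 := by
              intro h2
              have he1 : x.1 ∩ y.1 = x.1 := Finset.eq_of_subset_of_card_le
                Finset.inter_subset_left (by rw [h2, x.2])
              have hsub : x.1 ⊆ y.1 := by rw [← he1]; exact Finset.inter_subset_right
              exact hxy' (Subtype.ext (Finset.eq_of_subset_of_card_le hsub (by rw [x.2, y.2])))
            omega
          have hcup3 : (x.1 ∪ y.1).card = 3 := by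
            have hh := Finset.card_union_add_card_inter x.1 y.1
            rw [x.2, y.2, hcapxy] at hh; omega
          have hduxy : Disjoint u.1 (x.1 ∪ y.1) :=
            Finset.disjoint_union_right.mpr ⟨hdxu.symm, hdyu.symm⟩
          have hs1 : ((u.1 ∪ (x.1 ∪ y.1))ᶜ).card = 1 := by
            rw [Finset.card_compl, Finset.card_union_of_disjoint hduxy, u.2, hcup3,
              Fintype.card_fin]
          obtain ⟨s, hs⟩ := Finset.card_eq_one.mp hs1
          have hsnot : s ∉ u.1 ∪ (x.1 ∪ y.1) := by
            apply Finset.mem_compl.mp; rw [hs]; exact Finset.mem_singleton_self s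
          rw [Finset.mem_union, Finset.mem_union] at hsnot
          push_neg at hsnot
          obtain ⟨hsu, hsx, hsy⟩ := hsnot
          obtain ⟨p, q, hpq, hu2⟩ := Finset.card_eq_two.mp u.2
          have hpu : p ∈ u.1 := by rw [hu2]; simp
          have hqu : q ∈ u.1 := by rw [hu2]; simp
          have hps : p ≠ s := fun hh => hsu (hh ▸ hpu)
          have hqs : q ≠ s := fun hh => hsu (hh ▸ hqu)
          set w₁ : Edge := ⟨{p,s}, by
            rw [Finset.card_insert_of_notMem (by simp [hps]), Finset.card_singleton]⟩ with hw₁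
          set w₂ : Edge := ⟨{q,s}, by
            rw [Finset.card_insert_of_notMem (by simp [hqs]), Finset.card_singleton]⟩ with hw₂
          set zE : Edge := ⟨(x.1 ∪ y.1) \ (x.1 ∩ y.1), by
            rw [Finset.card_sdiff_of_subset (Finset.inter_subset_left.trans Finset.subset_union_left),
              hcup3, hcapxy]⟩ with hzE
          have hzsub : zE.1 ⊆ x.1 ∪ y.1 := by rw [hzE]; exact Finset.sdiff_subset
          obtain ⟨c0, hc0⟩ := Finset.card_eq_one.mp hcapxy
          have hc0xy : c0 ∈ x.1 ∩ y.1 := by rw [hc0]; simp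
          have hc0x : c0 ∈ x.1 := (Finset.mem_inter.mp hc0xy).1
          have hc0y : c0 ∈ y.1 := (Finset.mem_inter.mp hc0xy).2
          have hc0z : c0 ∉ zE.1 := by
            rw [hzE]; intro hh
            exact (Finset.mem_sdiff.mp hh).2 hc0xy
          have nzx : zE ≠ x := fun hh => hc0z (by rw [hh]; exact hc0x)
          have nzy : zE ≠ y := fun hh => hc0z (by rw [hh]; exact hc0y)
          have hnsubx : ¬ x.1 ⊆ y.1 := fun hsub => hxy'
            (Subtype.ext (Finset.eq_of_subset_of_card_le hsub (by rw [x.2, y.2])))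
          obtain ⟨d, hdx, hdny⟩ := Finset.not_subset.mp hnsubx
          have hdz : d ∈ zE.1 := by
            rw [hzE]
            exact Finset.mem_sdiff.mpr ⟨Finset.mem_union_left _ hdx,
              fun hh => hdny (Finset.mem_inter.mp hh).2⟩
          have hnsuby : ¬ y.1 ⊆ x.1 := fun hsub => hxy'
            (Subtype.ext (Finset.eq_of_subset_of_card_le hsub (by rw [x.2, y.2])).symm)
          obtain ⟨e, hey, henx⟩ := Finset.not_subset.mp hnsuby
          have hez : e ∈ zE.1 := by
            rw [hzE]
            exact Finset.mem_sdiff.mpr ⟨Finset.mem_union_right _ hey,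
              fun hh => henx (Finset.mem_inter.mp hh).1⟩
          have izx : ¬ Disjoint zE.1 x.1 := not_disjoint_of_mem hdz hdx
          have izy : ¬ Disjoint zE.1 y.1 := not_disjoint_of_mem hez hey
          have hdW1S : Disjoint w₁.1 (x.1 ∪ y.1) := by
            rw [hw₁]
            refine Finset.disjoint_left.mpr ?_
            intro t ht
            simp only [Finset.mem_insert, Finset.mem_singleton] at ht
            rcases ht with rfl | rfl
            · exact fun hh => Finset.disjoint_left.mp hduxy hpu hh
            · intro hh
              rcases Finset.mem_union.mp hh with h' | h'
              exacts [hsx h', hsy h']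
          have hdW2S : Disjoint w₂.1 (x.1 ∪ y.1) := by
            rw [hw₂]
            refine Finset.disjoint_left.mpr ?_
            intro t ht
            simp only [Finset.mem_insert, Finset.mem_singleton] at ht
            rcases ht with rfl | rfl
            · exact fun hh => Finset.disjoint_left.mp hduxy hqu hh
            · intro hh
              rcases Finset.mem_union.mp hh with h' | h'
              exacts [hsx h', hsy h']
          have hpw₁ : p ∈ w₁.1 := by rw [hw₁]; simp
          have hqw₂ : q ∈ w₂.1 := by rw [hw₂]; simp
          have hpnw₂ : p ∉ w₂.1 := by rw [hw₂]; simp [hpq, hps]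
          have hqnw₁ : q ∉ w₁.1 := by rw [hw₁]; simp [Ne.symm hpq, hqs]
          have nuw₁ : u ≠ w₁ := fun hh => hqnw₁ (by rw [← hh]; exact hqu)
          have nuw₂ : u ≠ w₂ := fun hh => hpnw₂ (by rw [← hh]; exact hpu)
          have nw₁w₂ : w₁ ≠ w₂ := edge_ne_of_mem_not_mem hpw₁ hpnw₂
          have hcov1 : zE.1 ∪ x.1 ∪ y.1 = x.1 ∪ y.1 := cov_of (fun z => by
            rw [hzE]
            simp only [Finset.mem_sdiff, Finset.mem_union, Finset.mem_inter]
            tauto)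
          have hcov2 : zE.1 ∪ y.1 ∪ x.1 = x.1 ∪ y.1 := cov_of (fun z => by
            rw [hzE]
            simp only [Finset.mem_sdiff, Finset.mem_union, Finset.mem_inter]
            tauto)
          have pdz1 : Disjoint zE.1 w₁.1 := (hdW1S.symm.mono_left hzsub).symm.symm
          have pdz2 : Disjoint zE.1 w₂.1 := (hdW2S.symm.mono_left hzsub).symm.symm
          refine two_le (γ₁ := ⟨(zE, w₁), Or.inr pdz1⟩) (γ₂ := ⟨(zE, w₂), Or.inr pdz2⟩)
            (npoint_ne_of_snd nw₁w₂) ?_ ?_ ?_ ?_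
          · exact adjT izx izy hidxy nzx nzy hxy' hcov1 hcup3
              hdW1S hduxy hdW2S (Ne.symm nuw₁) nw₁w₂ nuw₂ (Or.inr pdz1) hα
          · exact adjT izy izx (fun hh => hidxy hh.symm) nzy nzx (fun hh => hxy' hh.symm)
              hcov2 hcup3 hdW1S hduxy hdW2S (Ne.symm nuw₁) nw₁w₂ nuw₂ (Or.inr pdz1) hβ
          · exact adjT izx izy hidxy nzx nzy hxy' hcov1 hcup3
              hdW2S hduxy hdW1S (Ne.symm nuw₂) nw₁w₂.symm nuw₁ (Or.inr pdz2) hα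
          · exact adjT izy izx (fun hh => hidxy hh.symm) nzy nzx (fun hh => hxy' hh.symm)
              hcov2 hcup3 hdW2S hduxy hdW1S (Ne.symm nuw₂) nw₁w₂.symm nuw₁ (Or.inr pdz2) hβ
end

section
/- Let α and β be two distinct points of 𝕊 that both lie in P, or both lie in P'. Then α and β are non-collinear in 𝕊 and |{α,β}^⊥| ≥ 3 in 𝕊. -/
-- Auxiliary lemmas ------------------------------------------------------

instance : DecidableEq NPoint := by unfold NPoint; infer_instance
instance : DecidableEq BPoint := by unfold BPoint; infer_instance
instance : Fintype NPoint := by unfold NPoint; infer_instance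
instance : Finite BPoint := by unfold BPoint; infer_instance

lemma count_lemma : ∀ x y : Edge, x ≠ y →
    3 ≤ (Finset.univ.filter (fun u : Edge =>
      (x = u ∨ Disjoint x.1 u.1) ∧ (y = u ∨ Disjoint y.1 u.1))).card := by decide

lemma inP'_ne_inP (u x : Edge) : inP' u ≠ inP x := by
  intro hh; injection hh with hh; injection hh

lemma inP_ne_inP' (u x : Edge) : inP u ≠ inP' x := by
  intro hh; injection hh with hh; injection hh

lemma inP'_injective : Function.Injective inP' := by
  intro a b hab; injection hab with hab; injection hab with hab

lemma inP_injective : Function.Injective inP := by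
  intro a b hab; injection hab with hab; injection hab with hab

lemma adj_inP'_inP (u x : Edge) (hc : x = u ∨ Disjoint x.1 u.1) :
    BG.Adj (inP' u) (inP x) := by
  refine ⟨inP'_ne_inP u x, {inP x, inS ⟨(x,u), hc⟩, inP' u}, Or.inr ⟨⟨(x,u), hc⟩, rfl⟩, ?_, ?_⟩
  · right; right; rfl
  · left; rfl

lemma adj_inP_inP' (u x : Edge) (hc : u = x ∨ Disjoint u.1 x.1) :
    BG.Adj (inP u) (inP' x) := by
  refine ⟨inP_ne_inP' u x, {inP u, inS ⟨(u,x), hc⟩, inP' x}, Or.inr ⟨⟨(u,x), hc⟩, rfl⟩, ?_, ?_⟩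
  · left; rfl
  · right; right; rfl

lemma not_adj_inP (x y : Edge) (h : x ≠ y) : ¬ BG.Adj (inP x) (inP y) := by
  rintro ⟨hne, L, hL, hx, hy⟩
  rcases hL with ⟨L₀, _, rfl⟩ | ⟨p, rfl⟩
  · obtain ⟨q, _, hq⟩ := hx
    exact absurd hq (by intro hh; injection hh)
  · have key : ∀ z : Edge, inP z ∈ ({inP p.1.1, inS p, inP' p.1.2} : Set BPoint) →
        z = p.1.1 := by
      rintro z (hz | hz | hz)
      · exact inP_injective hz
      · exact absurd hz (by intro hh; injection hh)
      · exact absurd hz (inP_ne_inP' _ _)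
    exact h ((key x hx).trans (key y hy).symm)

lemma not_adj_inP' (x y : Edge) (h : x ≠ y) : ¬ BG.Adj (inP' x) (inP' y) := by
  rintro ⟨hne, L, hL, hx, hy⟩
  rcases hL with ⟨L₀, _, rfl⟩ | ⟨p, rfl⟩
  · obtain ⟨q, _, hq⟩ := hx
    exact absurd hq (by intro hh; injection hh)
  · have key : ∀ z : Edge, inP' z ∈ ({inP p.1.1, inS p, inP' p.1.2} : Set BPoint) →
        z = p.1.2 := by
      rintro z (hz | hz | hz)
      · exact absurd hz (inP'_ne_inP _ _)
      · exact absurd hz (by intro hh; injection hh)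
      · exact inP'_injective hz
    exact h ((key x hx).trans (key y hy).symm)

/-- Two distinct points of 𝕊 both lying in `P`, or both lying in `P'`, are
non-collinear in 𝕊 and have at least 3 common neighbours in 𝕊. -/
theorem statement10 (x y : Edge) (h : x ≠ y) :
    (¬ BG.Adj (inP x) (inP y) ∧
      3 ≤ {γ : BPoint | BG.Adj γ (inP x) ∧ BG.Adj γ (inP y)}.ncard) ∧
    (¬ BG.Adj (inP' x) (inP' y) ∧
      3 ≤ {γ : BPoint | BG.Adj γ (inP' x) ∧ BG.Adj γ (inP' y)}.ncard) := by

  set Tf : Finset Edge := Finset.univ.filter (fun u : Edge =>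
      (x = u ∨ Disjoint x.1 u.1) ∧ (y = u ∨ Disjoint y.1 u.1)) with hTf
  have hcard : 3 ≤ Tf.card := count_lemma x y h
  constructor
  · refine ⟨not_adj_inP x y h, ?_⟩
    have hsub : ↑(Tf.image inP') ⊆ {γ : BPoint | BG.Adj γ (inP x) ∧ BG.Adj γ (inP y)} := by
      intro γ hγ
      simp only [Finset.coe_image, Set.mem_image, Finset.mem_coe, hTf,
        Finset.mem_filter, Finset.mem_univ, true_and] at hγ
      obtain ⟨u, ⟨h1, h2⟩, rfl⟩ := hγ
      exact ⟨adj_inP'_inP u x h1, adj_inP'_inP u y h2⟩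
    calc (3 : ℕ) ≤ Tf.card := hcard
      _ = (Tf.image inP').card := (Finset.card_image_of_injective _ inP'_injective).symm
      _ = (↑(Tf.image inP') : Set BPoint).ncard := (Set.ncard_coe_finset _).symm
      _ ≤ _ := Set.ncard_le_ncard hsub (Set.toFinite _)
  · refine ⟨not_adj_inP' x y h, ?_⟩
    have hsub : ↑(Tf.image inP) ⊆ {γ : BPoint | BG.Adj γ (inP' x) ∧ BG.Adj γ (inP' y)} := by
      intro γ hγ
      simp only [Finset.coe_image, Set.mem_image, Finset.mem_coe, hTf,
        Finset.mem_filter, Finset.mem_univ, true_and] at hγ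
      obtain ⟨u, ⟨h1, h2⟩, rfl⟩ := hγ
      refine ⟨adj_inP_inP' u x ?_, adj_inP_inP' u y ?_⟩
      · exact h1.imp Eq.symm fun hd => hd.symm
      · exact h2.imp Eq.symm fun hd => hd.symm
    calc (3 : ℕ) ≤ Tf.card := hcard
      _ = (Tf.image inP).card := (Finset.card_image_of_injective _ inP_injective).symm
      _ = (↑(Tf.image inP) : Set BPoint).ncard := (Set.ncard_coe_finset _).symm
      _ ≤ _ := Set.ncard_le_ncard hsub (Set.toFinite _)
end

section
/- Let x ∈ P and u' ∈ P' with u ∉ x^⊥ (i.e. the edges x and u are distinct and not disjoint). Then d(x, u') = 3 in 𝕊. -/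
section Aux

/-- Any B-line containing `inP x` is a line of type `𝕃₁` with first coordinate `x`. -/
lemma line_of_inP {L : Set BPoint} (hL : IsBLine L) {x : Edge} (hx : inP x ∈ L) :
    ∃ p : NPoint, p.1.1 = x ∧ L = {inP p.1.1, inS p, inP' p.1.2} := by
  rcases hL with ⟨L₀, _, rfl⟩ | ⟨p, rfl⟩
  · rcases hx with ⟨q, _, hq⟩
    simp [inS, inP] at hq
  · refine ⟨p, ?_, rfl⟩
    rcases hx with h1 | h1 | h1
    · exact (Sum.inl.inj (Sum.inr.inj h1)).symm
    · exact absurd h1 (fun hc => Sum.inl_ne_inr ((congrArg id hc).symm))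
    · exact absurd (Sum.inr.inj h1) Sum.inl_ne_inr

/-- Any B-line containing `inP' u` is a line of type `𝕃₁` with second coordinate `u`. -/
lemma line_of_inP' {L : Set BPoint} (hL : IsBLine L) {u : Edge} (hu : inP' u ∈ L) :
    ∃ p : NPoint, p.1.2 = u ∧ L = {inP p.1.1, inS p, inP' p.1.2} := by
  rcases hL with ⟨L₀, _, rfl⟩ | ⟨p, rfl⟩
  · rcases hu with ⟨q, _, hq⟩
    simp [inS, inP'] at hq
  · refine ⟨p, ?_, rfl⟩
    rcases hu with h1 | h1 | h1
    · exact absurd (Sum.inr.inj h1) (fun hc => Sum.inl_ne_inr hc.symm)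
    · exact absurd h1 (fun hc => Sum.inl_ne_inr hc.symm)
    · exact (Sum.inr.inj (Sum.inr.inj h1)).symm

lemma adj_inP_inP'_s11 (p : NPoint) : BG.Adj (inP p.1.1) (inP' p.1.2) := by
  refine ⟨fun hc => Sum.inl_ne_inr (Sum.inr.inj hc),
    {inP p.1.1, inS p, inP' p.1.2}, Or.inr ⟨p, rfl⟩, ?_, ?_⟩
  · exact Set.mem_insert _ _
  · exact Set.mem_insert_iff.mpr (Or.inr (Set.mem_insert_iff.mpr (Or.inr rfl)))

lemma three_le_length {V : Type*} {G : SimpleGraph V} {a b : V} (hne : a ≠ b)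
    (h1 : ¬ G.Adj a b) (h2 : ∀ z, ¬ (G.Adj a z ∧ G.Adj z b)) (W : G.Walk a b) :
    3 ≤ W.length := by
  cases W with
  | nil => exact absurd rfl hne
  | cons h W1 =>
    cases W1 with
    | nil => exact absurd h h1
    | cons h2' W2 =>
      cases W2 with
      | nil => exact absurd ⟨h, h2'⟩ (h2 _)
      | cons h3 W3 => simp only [SimpleGraph.Walk.length_cons]; omega

end Aux

/-- If `x ∈ P` and `u' ∈ P'` with `u ∉ x^⊥` (the edges `x` and `u` are
distinct and not disjoint), then `d(x,u') = 3` in 𝕊. -/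
theorem statement11 (x u : Edge) (h : u ∉ perp {x}) :
    BG.dist (inP x) (inP' u) = 3 := by
  have hxu : ¬ (x = u ∨ Disjoint x.1 u.1) := by
    intro hc
    exact h (by intro z hz; simp only [Set.mem_singleton_iff] at hz; subst hz; exact hc)
  push_neg at hxu
  obtain ⟨hne_xu, hnd⟩ := hxu
  -- cardinality of the intersection is 1
  have hx2 : x.1.card = 2 := x.2
  have hu2 : u.1.card = 2 := u.2
  have hint_pos : 0 < (x.1 ∩ u.1).card := by
    rcases Finset.not_disjoint_iff_nonempty_inter.mp hnd with hne
    exact Finset.card_pos.mpr hne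
  have hint_le : (x.1 ∩ u.1).card ≤ 2 := by
    calc (x.1 ∩ u.1).card ≤ x.1.card := Finset.card_le_card Finset.inter_subset_left
    _ = 2 := hx2
  have hint_ne2 : (x.1 ∩ u.1).card ≠ 2 := by
    intro h2
    have h1 : x.1 ∩ u.1 = x.1 :=
      Finset.eq_of_subset_of_card_le Finset.inter_subset_left (by omega)
    have h2' : x.1 ∩ u.1 = u.1 :=
      Finset.eq_of_subset_of_card_le Finset.inter_subset_right (by omega)
    exact hne_xu (Subtype.ext (h1 ▸ h2'))
  have hint1 : (x.1 ∩ u.1).card = 1 := by omega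
  have hun : (x.1 ∪ u.1).card = 3 := by
    have := Finset.card_union_add_card_inter x.1 u.1
    omega
  have hcompl : ((x.1 ∪ u.1)ᶜ).card = 3 := by
    rw [Finset.card_compl, hun]
    simp
  obtain ⟨y', hy'sub, hy'card⟩ := Finset.exists_subset_card_eq (s := (x.1 ∪ u.1)ᶜ) (n := 2) (by omega)
  have hy'disj : Disjoint y' (x.1 ∪ u.1) := by
    rw [Finset.disjoint_left]
    intro a ha hb
    exact (Finset.mem_compl.mp (hy'sub ha)) hb
  have hy'x : Disjoint y' x.1 := hy'disj.mono_right Finset.subset_union_left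
  have hy'u : Disjoint y' u.1 := hy'disj.mono_right Finset.subset_union_right
  set y : Edge := ⟨y', hy'card⟩ with hy_def
  have hxy_card : (x.1 ∪ y').card = 4 := by
    rw [Finset.card_union_of_disjoint hy'x.symm, hx2, hy'card]
  have hwcard : ((x.1 ∪ y')ᶜ).card = 2 := by
    rw [Finset.card_compl, hxy_card]
    simp
  set w : Edge := ⟨(x.1 ∪ y')ᶜ, hwcard⟩ with hw_def
  have hxw : Disjoint x.1 w.1 := by
    have hd : Disjoint (x.1 ∪ y') (x.1 ∪ y')ᶜ := disjoint_compl_right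
    exact hd.mono_left Finset.subset_union_left
  have hyw : Disjoint y' w.1 := by
    have hd : Disjoint (x.1 ∪ y') (x.1 ∪ y')ᶜ := disjoint_compl_right
    exact hd.mono_left Finset.subset_union_right
  -- the three points of 𝓟 giving the path  x — w' — y — u'
  let q1 : NPoint := ⟨(x, w), Or.inr hxw⟩
  let q2 : NPoint := ⟨(y, w), Or.inr hyw⟩
  let q3 : NPoint := ⟨(y, u), Or.inr hy'u⟩
  have a1 : BG.Adj (inP x) (inP' w) := adj_inP_inP'_s11 q1
  have a2 : BG.Adj (inP' w) (inP y) := (adj_inP_inP'_s11 q2).symm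
  have a3 : BG.Adj (inP y) (inP' u) := adj_inP_inP'_s11 q3
  have hle : BG.dist (inP x) (inP' u) ≤ 3 :=
    SimpleGraph.dist_le (SimpleGraph.Walk.cons a1 (SimpleGraph.Walk.cons a2
      (SimpleGraph.Walk.cons a3 SimpleGraph.Walk.nil)))
  have hreach : BG.Reachable (inP x) (inP' u) :=
    ⟨SimpleGraph.Walk.cons a1 (SimpleGraph.Walk.cons a2
      (SimpleGraph.Walk.cons a3 SimpleGraph.Walk.nil))⟩
  have hne : inP x ≠ inP' u := fun hc => Sum.inl_ne_inr (Sum.inr.inj hc)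
  have hnadj : ¬ BG.Adj (inP x) (inP' u) := by
    rintro ⟨_, L, hL, hxL, huL⟩
    obtain ⟨p, hp1, hLeq⟩ := line_of_inP hL hxL
    rw [hLeq] at huL
    have hp2 : p.1.2 = u := by
      rcases huL with h1 | h1 | h1
      · exact absurd (Sum.inr.inj h1) (fun hc => Sum.inl_ne_inr hc.symm)
      · exact absurd h1 (fun hc => Sum.inl_ne_inr hc.symm)
      · exact (Sum.inr.inj (Sum.inr.inj h1)).symm
    apply h
    intro z hz
    simp only [Set.mem_singleton_iff] at hz
    subst hz
    rcases p.2 with hc | hc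
    · exact Or.inl (by rw [← hp1, ← hp2]; exact hc)
    · exact Or.inr (by rw [← hp1, ← hp2]; exact hc)
  have hnocom : ∀ z, ¬ (BG.Adj (inP x) z ∧ BG.Adj z (inP' u)) := by
    rintro z ⟨⟨hnz1, L, hL, hxL, hzL⟩, ⟨hnz2, M, hM, hzM, huM⟩⟩
    obtain ⟨p, hp1, hLeq⟩ := line_of_inP hL hxL
    obtain ⟨q, hq2, hMeq⟩ := line_of_inP' hM huM
    rw [hLeq] at hzL
    rw [hMeq] at hzM
    have hz1 : z = inS p ∨ z = inP' p.1.2 := by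
      rcases hzL with h1 | h1 | h1
      · exact (hnz1 (by rw [h1, hp1])).elim
      · exact Or.inl h1
      · exact Or.inr h1
    have hz2 : z = inP q.1.1 ∨ z = inS q := by
      rcases hzM with h1 | h1 | h1
      · exact Or.inl h1
      · exact Or.inr h1
      · exact (hnz2 (by rw [h1, hq2])).elim
    rcases hz1 with hz1 | hz1 <;> rcases hz2 with hz2 | hz2 <;>
      rw [hz1] at hz2
    · exact Sum.inl_ne_inr hz2
    · have hpq : p = q := Sum.inl.inj hz2
      apply h
      intro z' hz'
      simp only [Set.mem_singleton_iff] at hz'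
      subst hz'
      rcases p.2 with hc | hc
      · exact Or.inl (by rw [← hp1, ← hq2, ← hpq]; exact hc)
      · exact Or.inr (by rw [← hp1, ← hq2, ← hpq]; exact hc)
    · exact Sum.inl_ne_inr (Sum.inr.inj hz2).symm
    · exact Sum.inl_ne_inr hz2.symm
  obtain ⟨Wmin, hWmin⟩ := hreach.exists_walk_length_eq_dist
  have hge : 3 ≤ BG.dist (inP x) (inP' u) := by
    rw [← hWmin]
    exact three_le_length hne hnadj hnocom Wmin
  omega
end
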